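/- arXiv:0712.0292 — 12 statements merged into one kernel-verified Lean document; each statement's English description precedes it below -/
import Mathlib

section
/- Define f(x,b) = ∏_{k=1}^∞ k(x+k-1)/((k-b)(x+k+b-1)) for x, b ∈ (0,1). Then f(x,b)·sin(πb) = f(b,x)·sin(πx). -/
open Real Filter Finset

lemma telescope_prod (t : ℝ) (ht : 0 < t) (m : ℕ) :
    ∏ k ∈ Finset.Icc 1 m, (t + k - 1) * (k - t) / (k : ℝ) ^ 2
      = t / (t + m) * ∏ k ∈ Finset.Icc 1 m, (1 - t ^ 2 / (k : ℝ) ^ 2) := by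
  induction m with
  | zero => simp [ht.ne']
  | succ n ih =>
      rw [Finset.prod_Icc_succ_top (by omega), Finset.prod_Icc_succ_top (by omega), ih]
      have h1 : (t + n) ≠ 0 := by positivity
      have h2 : (t + (n + 1 : ℕ)) ≠ 0 := by push_cast; positivity
      have h3 : ((n : ℝ) + 1) ≠ 0 := by positivity
      push_cast at h2 ⊢
      field_simp
      ring

lemma aux_tendsto (t : ℝ) (ht : 0 < t) :
    Tendsto (fun m : ℕ => (m : ℝ) * ∏ k ∈ Finset.Icc 1 m,
        (t + k - 1) * (k - t) / (k : ℝ) ^ 2) atTop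
      (nhds (Real.sin (Real.pi * t) / Real.pi)) := by
  have hre : ∀ m : ℕ, ∏ k ∈ Finset.Icc 1 m, (1 - t ^ 2 / (k : ℝ) ^ 2)
      = ∏ j ∈ Finset.range m, (1 - t ^ 2 / ((j : ℝ) + 1) ^ 2) := by
    intro m
    rw [show Finset.Icc 1 m = Finset.Ico 1 (m + 1) by rfl, Finset.prod_Ico_eq_prod_range]
    simp [add_comm]
  have h1 : Tendsto (fun m : ℕ => (m : ℝ) / (t + m)) atTop (nhds 1) := by
    have h2 : Tendsto (fun m : ℕ => t / (t + m)) atTop (nhds 0) := by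
      apply Tendsto.div_atTop tendsto_const_nhds
      exact tendsto_atTop_add_const_left _ _ tendsto_natCast_atTop_atTop
    have := (tendsto_const_nhds (x := (1:ℝ))).sub h2
    rw [sub_zero] at this
    apply this.congr'
    filter_upwards [eventually_gt_atTop 0] with m hm
    have : (t + m) ≠ 0 := by positivity
    field_simp
    ring
  have h2 : Tendsto (fun m : ℕ => (1 / Real.pi) *
      (Real.pi * t * ∏ j ∈ Finset.range m, (1 - t ^ 2 / ((j : ℝ) + 1) ^ 2))) atTop
      (nhds (Real.sin (Real.pi * t) / Real.pi)) := by
    have := (Real.tendsto_euler_sin_prod t).const_mul (1 / Real.pi)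
    convert this using 2
    ring
  have := h1.mul h2
  rw [one_mul] at this
  apply this.congr
  intro m
  rw [telescope_prod t ht m, hre]
  have hπ : Real.pi ≠ 0 := Real.pi_ne_zero
  field_simp

/-- With `f(x,b) = ∏_{k=1}^∞ k(x+k-1)/((k-b)(x+k+b-1))` for `x, b ∈ (0,1)`,
we have `f(x,b)·sin(πb) = f(b,x)·sin(πx)`. -/
theorem joint_factor_symmetry (x b : ℝ) (hx0 : 0 < x) (hx1 : x < 1) (hb0 : 0 < b) (hb1 : b < 1)
    (fxb fbx : ℝ)
    (hfxb : Tendsto (fun m : ℕ => ∏ k ∈ Finset.Icc 1 m,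
        (k : ℝ) * (x + k - 1) / ((k - b) * (x + k + b - 1))) atTop (nhds fxb))
    (hfbx : Tendsto (fun m : ℕ => ∏ k ∈ Finset.Icc 1 m,
        (k : ℝ) * (b + k - 1) / ((k - x) * (b + k + x - 1))) atTop (nhds fbx)) :
    fxb * Real.sin (Real.pi * b) = fbx * Real.sin (Real.pi * x) := by
  have key : ∀ m : ℕ,
      (∏ k ∈ Finset.Icc 1 m, (k : ℝ) * (x + k - 1) / ((k - b) * (x + k + b - 1)))
        * ((m : ℝ) * ∏ k ∈ Finset.Icc 1 m, (b + k - 1) * (k - b) / (k : ℝ) ^ 2)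
      = (∏ k ∈ Finset.Icc 1 m, (k : ℝ) * (b + k - 1) / ((k - x) * (b + k + x - 1)))
        * ((m : ℝ) * ∏ k ∈ Finset.Icc 1 m, (x + k - 1) * (k - x) / (k : ℝ) ^ 2) := by
    intro m
    have : (∏ k ∈ Finset.Icc 1 m, (k : ℝ) * (x + k - 1) / ((k - b) * (x + k + b - 1)))
        * (∏ k ∈ Finset.Icc 1 m, (b + k - 1) * (k - b) / (k : ℝ) ^ 2)
      = (∏ k ∈ Finset.Icc 1 m, (k : ℝ) * (b + k - 1) / ((k - x) * (b + k + x - 1)))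
        * (∏ k ∈ Finset.Icc 1 m, (x + k - 1) * (k - x) / (k : ℝ) ^ 2) := by
      rw [← Finset.prod_mul_distrib, ← Finset.prod_mul_distrib]
      apply Finset.prod_congr rfl
      intro k hk
      have hk1 : 1 ≤ k := (Finset.mem_Icc.mp hk).1
      have hkpos : (0 : ℝ) < k := by exact_mod_cast hk1
      have hkb : (k : ℝ) - b ≠ 0 := by
        have : b < (k : ℝ) := lt_of_lt_of_le hb1 (by exact_mod_cast hk1)
        linarith
      have hkx : (k : ℝ) - x ≠ 0 := by
        have : x < (k : ℝ) := lt_of_lt_of_le hx1 (by exact_mod_cast hk1)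
        linarith
      have hxb : x + (k : ℝ) + b - 1 ≠ 0 := by
        have : (1 : ℝ) ≤ (k : ℝ) := by exact_mod_cast hk1
        nlinarith
      have hbx : b + (k : ℝ) + x - 1 ≠ 0 := by
        have : (1 : ℝ) ≤ (k : ℝ) := by exact_mod_cast hk1
        nlinarith
      field_simp
      ring
    calc _ = ((∏ k ∈ Finset.Icc 1 m, (k : ℝ) * (x + k - 1) / ((k - b) * (x + k + b - 1)))
        * (∏ k ∈ Finset.Icc 1 m, (b + k - 1) * (k - b) / (k : ℝ) ^ 2)) * m := by ring
      _ = ((∏ k ∈ Finset.Icc 1 m, (k : ℝ) * (b + k - 1) / ((k - x) * (b + k + x - 1)))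
        * (∏ k ∈ Finset.Icc 1 m, (x + k - 1) * (k - x) / (k : ℝ) ^ 2)) * m := by rw [this]
      _ = _ := by ring
  have hL := hfxb.mul (aux_tendsto b hb0)
  have hR := hfbx.mul (aux_tendsto x hx0)
  have hLR : fxb * (Real.sin (Real.pi * b) / Real.pi)
      = fbx * (Real.sin (Real.pi * x) / Real.pi) := by
    apply tendsto_nhds_unique (hL.congr (fun m => key m)) hR
  have hπ : Real.pi ≠ 0 := Real.pi_ne_zero
  field_simp at hLR
  linarith [hLR]
end

section
/- Γ(1/4)² = π·(2π)^{1/2}·∏_{k=1}^∞ ((2k-1)/(2k))·((4k-1)/(4k-3)). -/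
open Real Filter Finset

lemma prod_Icc_eq_prod_range (m : ℕ) :
    ∏ k ∈ Finset.Icc 1 m, ((2 * (k : ℝ) - 1) / (2 * k)) * ((4 * (k : ℝ) - 1) / (4 * k - 3)) =
      (∏ j ∈ Finset.range m, ((3:ℝ)/4 + j)) * (∏ j ∈ Finset.range m, ((1:ℝ)/2 + j)) /
        ((∏ j ∈ Finset.range m, ((1:ℝ)/4 + j)) * (Nat.factorial m : ℝ)) := by
  induction m with
  | zero => simp
  | succ m ih =>
      rw [Finset.prod_Icc_succ_top (Nat.le_add_left 1 m), ih]
      rw [Finset.prod_range_succ, Finset.prod_range_succ, Finset.prod_range_succ]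
      have hA : 0 < ∏ j ∈ Finset.range m, ((1:ℝ)/4 + j) :=
        Finset.prod_pos fun j _ => by positivity
      have hB : 0 < ∏ j ∈ Finset.range m, ((1:ℝ)/2 + j) :=
        Finset.prod_pos fun j _ => by positivity
      have hC : 0 < ∏ j ∈ Finset.range m, ((3:ℝ)/4 + j) :=
        Finset.prod_pos fun j _ => by positivity
      have hm : (0:ℝ) < (Nat.factorial m : ℝ) := by exact_mod_cast Nat.factorial_pos m
      have h1 : (0:ℝ) < 2 * ((m:ℝ) + 1) := by positivity
      have h2 : (0:ℝ) < 4 * ((m:ℝ) + 1) - 3 := by nlinarith [Nat.cast_nonneg (α := ℝ) m]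
      rw [Nat.factorial_succ]
      push_cast
      field_simp
      ring

/-- `Γ(1/4)² = π·(2π)^{1/2}·∏_{k=1}^∞ ((2k-1)/(2k))·((4k-1)/(4k-3))`. -/
theorem gamma_quarter_sq (P : ℝ)
    (hP : Tendsto (fun m : ℕ => ∏ k ∈ Finset.Icc 1 m,
        ((2 * (k : ℝ) - 1) / (2 * k)) * ((4 * (k : ℝ) - 1) / (4 * k - 3))) atTop (nhds P)) :
    (Real.Gamma (1/4)) ^ 2 = Real.pi * (2 * Real.pi) ^ ((1 : ℝ)/2) * P := by
  have h14 : 0 < Real.Gamma (1/4) := Real.Gamma_pos_of_pos (by norm_num)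
  have h34 : 0 < Real.Gamma (3/4) := Real.Gamma_pos_of_pos (by norm_num)
  have h12 : 0 < Real.Gamma (1/2) := Real.Gamma_pos_of_pos (by norm_num)
  set L : ℝ := Real.Gamma (1/4) / (Real.Gamma (3/4) * Real.Gamma (1/2)) with hLdef
  have hf : Tendsto (fun n : ℕ =>
      Real.GammaSeq (1/4) n / (Real.GammaSeq (3/4) n * Real.GammaSeq (1/2) n)
        * ((n : ℝ) / (n + 1))) atTop (nhds (L * 1)) := by
    refine Tendsto.mul ?_ (tendsto_natCast_div_add_atTop (1 : ℝ))
    exact (Real.GammaSeq_tendsto_Gamma (1/4)).div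
      ((Real.GammaSeq_tendsto_Gamma (3/4)).mul (Real.GammaSeq_tendsto_Gamma (1/2)))
      (by positivity)
  rw [mul_one] at hf
  have key : ∀ n : ℕ, 1 ≤ n →
      Real.GammaSeq (1/4) n / (Real.GammaSeq (3/4) n * Real.GammaSeq (1/2) n)
        * ((n : ℝ) / (n + 1)) =
      ∏ k ∈ Finset.Icc 1 (n + 1),
        ((2 * (k : ℝ) - 1) / (2 * k)) * ((4 * (k : ℝ) - 1) / (4 * k - 3)) := by
    intro n hn
    have hn0 : (0:ℝ) < n := by exact_mod_cast hn
    rw [prod_Icc_eq_prod_range]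
    simp only [Real.GammaSeq]
    have hA : 0 < ∏ j ∈ Finset.range (n + 1), ((1:ℝ)/4 + j) :=
      Finset.prod_pos fun j _ => by positivity
    have hB : 0 < ∏ j ∈ Finset.range (n + 1), ((1:ℝ)/2 + j) :=
      Finset.prod_pos fun j _ => by positivity
    have hC : 0 < ∏ j ∈ Finset.range (n + 1), ((3:ℝ)/4 + j) :=
      Finset.prod_pos fun j _ => by positivity
    have hfac : (0:ℝ) < (Nat.factorial n : ℝ) := by exact_mod_cast Nat.factorial_pos n
    have hr1 : (0:ℝ) < (n:ℝ) ^ ((1:ℝ)/4) := Real.rpow_pos_of_pos hn0 _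
    have hpow : (n:ℝ) ^ ((3:ℝ)/4) * (n:ℝ) ^ ((1:ℝ)/2) = (n:ℝ) ^ ((1:ℝ)/4) * (n:ℝ) := by
      rw [← Real.rpow_add hn0, ← Real.rpow_add_one hn0.ne']
      norm_num
    set a := ∏ j ∈ Finset.range (n + 1), ((1:ℝ)/4 + j) with ha
    set b := ∏ j ∈ Finset.range (n + 1), ((1:ℝ)/2 + j) with hb
    set c := ∏ j ∈ Finset.range (n + 1), ((3:ℝ)/4 + j) with hc
    set F := (Nat.factorial n : ℝ) with hF
    rw [Nat.factorial_succ]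
    push_cast
    have e : (n:ℝ) ^ ((3:ℝ)/4) * F / c * ((n:ℝ) ^ ((1:ℝ)/2) * F / b)
        = (n:ℝ) ^ ((1:ℝ)/4) * (n:ℝ) * (F * F) / (c * b) := by
      rw [div_mul_div_comm, show (n:ℝ) ^ ((3:ℝ)/4) * F * ((n:ℝ) ^ ((1:ℝ)/2) * F)
        = ((n:ℝ) ^ ((3:ℝ)/4) * (n:ℝ) ^ ((1:ℝ)/2)) * (F * F) from by ring, hpow]
    rw [e]
    field_simp
    ring
  have hq : Tendsto (fun n : ℕ => ∏ k ∈ Finset.Icc 1 (n + 1),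
      ((2 * (k : ℝ) - 1) / (2 * k)) * ((4 * (k : ℝ) - 1) / (4 * k - 3))) atTop (nhds L) := by
    refine hf.congr' ?_
    filter_upwards [eventually_ge_atTop 1] with n hn using key n hn
  have hPL : P = L := by
    refine tendsto_nhds_unique hP ?_
    exact (tendsto_add_atTop_iff_nat 1).mp hq
  have hrefl : Real.Gamma (1/4) * Real.Gamma (3/4) = π * Real.sqrt 2 := by
    have h := Real.Gamma_mul_Gamma_one_sub (1/4)
    have hs : Real.sin (π * (1/4)) = Real.sqrt 2 / 2 := by
      rw [show π * (1/4) = π / 4 by ring, Real.sin_pi_div_four]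
    norm_num [hs] at h
    rw [h]
    rw [div_div_eq_mul_div, div_eq_iff (by positivity : Real.sqrt 2 ≠ 0)]
    rw [mul_assoc, Real.mul_self_sqrt (by norm_num)]
  have hhalf : Real.Gamma (1/2) = Real.sqrt π := Real.Gamma_one_half_eq
  have hroot : (2 * π) ^ ((1:ℝ)/2) = Real.sqrt 2 * Real.sqrt π := by
    rw [← Real.sqrt_eq_rpow, Real.sqrt_mul (by norm_num)]
  rw [hPL, hLdef, hroot]
  rw [hhalf] at *
  have hprod : Real.Gamma (3/4) * Real.sqrt π > 0 := by positivity
  field_simp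
  linear_combination hrefl
end

section
/- For x > 0 and y ∈ (0,1), the Beta function satisfies B(x,y) = (1/y)·∏_{k=1}^∞ k(k-1+x+y)/((k+y)(k-1+x)). -/
open Real Filter Finset Topology

lemma prod_Icc_eq (x y : ℝ) (m : ℕ) :
    (∏ k ∈ Finset.Icc 1 m, (k : ℝ) * (k - 1 + x + y) / ((k + y) * (k - 1 + x)))
      = ∏ j ∈ Finset.range m, ((j + 1 : ℝ) * (j + x + y) / ((j + 1 + y) * (j + x))) := by
  rw [← Finset.Ico_add_one_right_eq_Icc, Finset.prod_Ico_eq_prod_range]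
  refine Finset.prod_congr rfl fun j _ => ?_
  push_cast
  ring_nf

lemma prod_range_add_one (m : ℕ) :
    ∏ j ∈ Finset.range m, ((j : ℝ) + 1) = (m.factorial : ℝ) := by
  induction m with
  | zero => simp
  | succ n ih =>
    rw [Finset.prod_range_succ, ih, Nat.factorial_succ]
    push_cast; ring

/-- For `x > 0` and `y ∈ (0,1)`, the Beta function `B(x,y) = Γ(x)Γ(y)/Γ(x+y)` satisfies
`B(x,y) = (1/y)·∏_{k=1}^∞ k(k-1+x+y)/((k+y)(k-1+x))`. -/
theorem beta_infinite_product (x y : ℝ) (hx : 0 < x) (hy0 : 0 < y) (hy1 : y < 1) :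
    Tendsto (fun m : ℕ => (1 / y) * ∏ k ∈ Finset.Icc 1 m,
        (k : ℝ) * (k - 1 + x + y) / ((k + y) * (k - 1 + x))) atTop
      (nhds (Real.Gamma x * Real.Gamma y / Real.Gamma (x + y))) := by
  have hxy : 0 < x + y := by linarith
  -- limit of the auxiliary factor
  have h1 : Tendsto (fun m : ℕ => (x + m) / (x + y + m)) atTop (𝓝 1) := by
    have h0 : Tendsto (fun m : ℕ => (x + y + (m : ℝ))⁻¹) atTop (𝓝 0) := by
      apply tendsto_inv_atTop_zero.comp
      exact tendsto_atTop_add_const_left _ _ tendsto_natCast_atTop_atTop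
    have := (tendsto_const_nhds (x := (1:ℝ)) (f := atTop)).sub (h0.const_mul y)
    rw [mul_zero, sub_zero] at this
    refine this.congr' ?_
    filter_upwards [eventually_gt_atTop 0] with m hm
    have hden : x + y + (m : ℝ) ≠ 0 := by positivity
    field_simp
    ring
  have hG : Tendsto (fun m : ℕ =>
      Real.GammaSeq x m * Real.GammaSeq y m / Real.GammaSeq (x + y) m) atTop
      (𝓝 (Real.Gamma x * Real.Gamma y / Real.Gamma (x + y))) :=
    ((Real.GammaSeq_tendsto_Gamma x).mul (Real.GammaSeq_tendsto_Gamma y)).div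
      (Real.GammaSeq_tendsto_Gamma (x + y)) (Real.Gamma_pos_of_pos hxy).ne'
  have key := hG.mul h1
  rw [mul_one] at key
  refine key.congr' ?_
  filter_upwards [eventually_gt_atTop 0] with m hm
  have hm' : (0:ℝ) < m := by exact_mod_cast hm
  rw [prod_Icc_eq]
  rw [Finset.prod_div_distrib]
  simp only [Finset.prod_mul_distrib]
  have e1 := prod_range_add_one m
  have e2 : (∏ j ∈ Finset.range m, ((j : ℝ) + 1 + y)) * y
      = ∏ j ∈ Finset.range (m + 1), (y + j) := by
    rw [Finset.prod_range_succ']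
    simp only [Nat.cast_add, Nat.cast_one, Nat.cast_zero, add_zero]
    congr 1
    exact Finset.prod_congr rfl fun j _ => by push_cast; ring
  have e3 : (∏ j ∈ Finset.range m, ((j : ℝ) + x + y)) * (x + y + m)
      = ∏ j ∈ Finset.range (m + 1), (x + y + j) := by
    rw [Finset.prod_range_succ]
    congr 1
    exact Finset.prod_congr rfl fun j _ => by ring
  have e4 : (∏ j ∈ Finset.range m, ((j : ℝ) + x)) * (x + m)
      = ∏ j ∈ Finset.range (m + 1), (x + j) := by
    rw [Finset.prod_range_succ]
    congr 1
    exact Finset.prod_congr rfl fun j _ => by ring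
  -- positivity of all products
  have px : (0:ℝ) < ∏ j ∈ Finset.range (m + 1), (x + j) :=
    Finset.prod_pos fun j _ => by positivity
  have py : (0:ℝ) < ∏ j ∈ Finset.range (m + 1), (y + j) :=
    Finset.prod_pos fun j _ => by positivity
  have pxy : (0:ℝ) < ∏ j ∈ Finset.range (m + 1), (x + y + j) :=
    Finset.prod_pos fun j _ => by positivity
  have px' : (0:ℝ) < ∏ j ∈ Finset.range m, ((j : ℝ) + x) :=
    Finset.prod_pos fun j _ => by positivity
  have py' : (0:ℝ) < ∏ j ∈ Finset.range m, ((j : ℝ) + 1 + y) :=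
    Finset.prod_pos fun j _ => by positivity
  have pxy' : (0:ℝ) < ∏ j ∈ Finset.range m, ((j : ℝ) + x + y) :=
    Finset.prod_pos fun j _ => by positivity
  have hpow : (m : ℝ) ^ x * (m : ℝ) ^ y = (m : ℝ) ^ (x + y) :=
    (Real.rpow_add hm' x y).symm
  have hxm : (0:ℝ) < x + y + m := by positivity
  have hpowpos : (0:ℝ) < (m : ℝ) ^ (x + y) := Real.rpow_pos_of_pos hm' _
  have hfac : (0:ℝ) < (m.factorial : ℝ) := by exact_mod_cast m.factorial_pos
  rw [Real.GammaSeq, Real.GammaSeq, Real.GammaSeq, e1, ← e2, ← e3, ← e4, ← hpow]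
  have n1 : y ≠ 0 := hy0.ne'
  have n2 : (∏ j ∈ Finset.range m, ((j : ℝ) + 1 + y)) ≠ 0 := py'.ne'
  have n3 : (∏ j ∈ Finset.range m, ((j : ℝ) + x)) ≠ 0 := px'.ne'
  have n4 : (∏ j ∈ Finset.range m, ((j : ℝ) + x + y)) ≠ 0 := pxy'.ne'
  have n5 : ((m : ℝ) ^ x) ≠ 0 := (Real.rpow_pos_of_pos hm' x).ne'
  have n6 : ((m : ℝ) ^ y) ≠ 0 := (Real.rpow_pos_of_pos hm' y).ne'
  have n7 : (m.factorial : ℝ) ≠ 0 := hfac.ne'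
  have n8 : x + y + (m : ℝ) ≠ 0 := hxm.ne'
  field_simp
end

section
/- For every integer p ≥ 3, Γ(1/p)^p = ((2π)^{p-1}/p)·∏_{k=1}^{p-2} 1/f(1/p, k/p), where f(x,b) = ∏_{j=1}^∞ j(x+j-1)/((j-b)(x+j+b-1)). -/
open Real Filter Finset

lemma abs_one_sub_exp (θ : ℝ) :
    ‖1 - Complex.exp (θ * Complex.I)‖ = 2 * |Real.sin (θ/2)| := by
  have h : Complex.normSq (1 - Complex.exp (θ * Complex.I))
      = (2 * |Real.sin (θ/2)|)^2 := by
    rw [Complex.exp_mul_I]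
    have h1 := Real.sin_sq_add_cos_sq (θ/2)
    have h2 : Real.cos θ = 1 - 2 * Real.sin (θ/2)^2 := by
      have hc := Real.cos_two_mul (θ/2)
      have e : 2*(θ/2) = θ := by ring
      rw [e] at hc
      nlinarith
    have h3 : |Real.sin (θ/2)|^2 = Real.sin (θ/2)^2 := sq_abs _
    simp only [Complex.normSq_apply, Complex.sub_re, Complex.sub_im, Complex.one_re,
      Complex.one_im, Complex.add_re, Complex.add_im, Complex.mul_re, Complex.mul_im,
      Complex.I_re, Complex.I_im, Complex.cos_ofReal_re, Complex.cos_ofReal_im,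
      Complex.sin_ofReal_re, Complex.sin_ofReal_im]
    nlinarith [Real.sin_sq_add_cos_sq θ]
  have := congrArg Real.sqrt h
  rwa [Real.sqrt_sq (by positivity), ← Complex.norm_def] at this

lemma two_sin_prod (p : ℕ) (hp : 1 ≤ p) :
    ∏ j ∈ Finset.Icc 1 (p-1), (2 * Real.sin (π * j / p)) = p := by
  obtain ⟨n, rfl⟩ : ∃ n, p = n + 1 := ⟨p - 1, by omega⟩
  have hμ := Complex.isPrimitiveRoot_exp (n+1) (by omega)
  have h := hμ.prod_one_sub_pow_eq_order
  have habs := congrArg norm h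
  rw [norm_prod] at habs
  have hre : ∀ k ∈ Finset.range n,
      ‖1 - Complex.exp (2 * π * Complex.I / ((n+1 : ℕ):ℂ)) ^ (k+1)‖
        = 2 * Real.sin (π * (k+1) / (n+1)) := by
    intro k hk
    rw [Finset.mem_range] at hk
    have he : Complex.exp (2 * π * Complex.I / ((n+1 : ℕ):ℂ)) ^ (k+1)
        = Complex.exp (((2 * π * (k+1) / (n+1) : ℝ) : ℂ) * Complex.I) := by
      rw [← Complex.exp_nat_mul]
      congr 1
      push_cast
      ring
    rw [he, abs_one_sub_exp]
    have hpos : 0 < π * (k+1) / (n+1) := by positivity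
    have hlt : π * (k+1) / (n+1) < π := by
      rw [div_lt_iff₀ (by positivity)]
      have : ((k:ℝ)+1) < ((n:ℝ)+1) := by exact_mod_cast by omega
      nlinarith [Real.pi_pos]
    rw [show (2 * π * (k+1) / (n+1) : ℝ) / 2 = π * (k+1) / (n+1) by ring,
      abs_of_pos (Real.sin_pos_of_pos_of_lt_pi hpos hlt)]
  rw [Finset.prod_congr rfl hre] at habs
  have hcast : ‖(n:ℂ) + 1‖ = (n:ℝ) + 1 := by
    rw [show ((n:ℂ)+1) = ((n+1 : ℕ) : ℂ) by push_cast; ring, Complex.norm_natCast]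
    push_cast; ring
  rw [hcast] at habs
  rw [← Finset.Ico_add_one_right_eq_Icc, Finset.prod_Ico_eq_prod_range]
  simp only [Nat.add_sub_cancel, Nat.succ_sub_one]
  push_cast
  refine Eq.trans (Finset.prod_congr rfl fun i _ => ?_) habs
  ring_nf

lemma prod_tendsto_gamma (x b : ℝ) (hx : 0 < x) (hb : 0 < b) (hb1 : b < 1) :
    Tendsto (fun m : ℕ => ∏ j ∈ Finset.Icc 1 m,
        (j : ℝ) * (x + j - 1) / ((j - b) * (x + j + b - 1)))
      atTop (nhds (Real.Gamma (1-b) * Real.Gamma (x+b) / Real.Gamma x)) := by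
  have hΓx : Real.Gamma x ≠ 0 := (Real.Gamma_pos_of_pos hx).ne'
  have h1 : Tendsto (fun m : ℕ => Real.GammaSeq (1-b) m * Real.GammaSeq (x+b) m /
      Real.GammaSeq x m) atTop (nhds (Real.Gamma (1-b) * Real.Gamma (x+b) / Real.Gamma x)) :=
    ((Real.GammaSeq_tendsto_Gamma (1-b)).mul (Real.GammaSeq_tendsto_Gamma (x+b))).div
      (Real.GammaSeq_tendsto_Gamma x) hΓx
  have hz := tendsto_one_div_atTop_nhds_zero_nat (𝕜 := ℝ)
  have h2 : Tendsto (fun m : ℕ => ((1-b) * (1/m) + 1) * ((x+b) * (1/m) + 1) / (x * (1/m) + 1))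
      atTop (nhds 1) := by
    have := (((hz.const_mul (1-b)).add_const 1).mul ((hz.const_mul (x+b)).add_const 1)).div
      ((hz.const_mul x).add_const 1) (by norm_num)
    simpa [Pi.div_def] using this
  have key := h1.mul h2
  rw [mul_one] at key
  refine key.congr' ?_
  filter_upwards [eventually_ge_atTop 1] with m hm
  -- now prove the identity for m ≥ 1
  have hm0 : (0:ℝ) < m := by exact_mod_cast hm
  have hfac : (0:ℝ) < (Nat.factorial m : ℝ) := by positivity
  have hQ : ∀ s : ℝ, 0 < s → (0:ℝ) < ∏ j ∈ Finset.range (m+1), (s + j) := by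
    intro s hs
    exact Finset.prod_pos fun j _ => by positivity
  have hA := hQ x hx
  have hB := hQ (1-b) (by linarith)
  have hC := hQ (x+b) (by linarith)
  -- split LHS product
  have hsplit : ∏ j ∈ Finset.Icc 1 m, (j : ℝ) * (x + j - 1) / ((j - b) * (x + j + b - 1))
      = ((Nat.factorial m : ℝ) * ∏ j ∈ Finset.Icc 1 m, (x + j - 1)) /
        ((∏ j ∈ Finset.Icc 1 m, ((j:ℝ) - b)) * ∏ j ∈ Finset.Icc 1 m, (x + j + b - 1)) := by
    rw [Finset.prod_div_distrib, Finset.prod_mul_distrib, Finset.prod_mul_distrib]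
    congr 1
    congr 1
    rw [← Nat.cast_prod]
    congr 1
    rw [← Finset.Ico_add_one_right_eq_Icc, Finset.prod_Ico_id_eq_factorial]
  have hshift : ∀ s : ℝ, (∏ j ∈ Finset.Icc 1 m, (s + j - 1)) * (s + m)
      = ∏ j ∈ Finset.range (m+1), (s + j) := by
    intro s
    rw [← Finset.Ico_add_one_right_eq_Icc, Finset.prod_Ico_eq_prod_range, Finset.prod_range_succ]
    congr 1
    refine Finset.prod_congr (by simp) fun i _ => ?_
    push_cast; ring
  have hb' : ∀ j : ℕ, ((j:ℝ) - b) = ((1-b) + j - 1) := fun j => by ring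
  have hc' : ∀ j : ℕ, (x + j + b - 1) = ((x+b) + j - 1) := fun j => by ring
  -- GammaSeq expansion
  have hGS : ∀ s : ℝ, Real.GammaSeq s m = (m:ℝ) ^ s * (Nat.factorial m : ℝ) /
      ∏ j ∈ Finset.range (m+1), (s + j) := fun s => rfl
  have hpow : (m:ℝ) ^ (1-b) * (m:ℝ) ^ (x+b) = (m:ℝ) ^ x * m := by
    rw [← Real.rpow_add hm0, show (1-b)+(x+b) = x + 1 by ring, Real.rpow_add hm0,
      Real.rpow_one]
  have hxm : x + (m:ℝ) ≠ 0 := by positivity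
  have hbm : (1-b) + (m:ℝ) ≠ 0 := by nlinarith
  have hcm : (x+b) + (m:ℝ) ≠ 0 := by positivity
  rw [hsplit, hGS, hGS, hGS]
  have e1 : ∏ j ∈ Finset.Icc 1 m, (x + j - 1) = (∏ j ∈ Finset.range (m+1), (x + j)) / (x + m) := by
    rw [eq_div_iff hxm]; exact hshift x
  have e2 : ∏ j ∈ Finset.Icc 1 m, ((j:ℝ) - b)
      = (∏ j ∈ Finset.range (m+1), ((1-b) + j)) / ((1-b) + m) := by
    rw [Finset.prod_congr rfl fun j _ => hb' j, eq_div_iff hbm]; exact hshift (1-b)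
  have e3 : ∏ j ∈ Finset.Icc 1 m, (x + j + b - 1)
      = (∏ j ∈ Finset.range (m+1), ((x+b) + j)) / ((x+b) + m) := by
    rw [Finset.prod_congr rfl fun j _ => hc' j, eq_div_iff hcm]; exact hshift (x+b)
  rw [e1, e2, e3]
  have hmx : (0:ℝ) < (m:ℝ) ^ x := Real.rpow_pos_of_pos hm0 x
  have hmb : (0:ℝ) < (m:ℝ) ^ (1-b) := Real.rpow_pos_of_pos hm0 _
  have hmc : (0:ℝ) < (m:ℝ) ^ (x+b) := Real.rpow_pos_of_pos hm0 _
  field_simp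
  exact hpow

/-- For every integer `p ≥ 3`,
`Γ(1/p)^p = ((2π)^{p-1}/p)·∏_{k=1}^{p-2} 1/f(1/p, k/p)` where
`f(x,b) = ∏_{j=1}^∞ j(x+j-1)/((j-b)(x+j+b-1))`. -/
theorem gamma_recip_p_pow (p : ℕ) (hp : 3 ≤ p) (F : ℕ → ℝ)
    (hF : ∀ k ∈ Finset.Icc 1 (p - 2),
      Tendsto (fun m : ℕ => ∏ j ∈ Finset.Icc 1 m,
          (j : ℝ) * ((1 : ℝ)/p + j - 1) / ((j - (k : ℝ)/p) * ((1 : ℝ)/p + j + (k : ℝ)/p - 1)))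
        atTop (nhds (F k))) :
    (Real.Gamma (1/p)) ^ p = (2 * Real.pi) ^ (p - 1) / p *
      ∏ k ∈ Finset.Icc 1 (p - 2), 1 / F k := by

  have hp0 : (0:ℝ) < p := by exact_mod_cast (by omega : 0 < p)
  -- identify F k
  have hFk : ∀ k ∈ Finset.Icc 1 (p-2), F k =
      Real.Gamma (1 - (k:ℝ)/p) * Real.Gamma ((1:ℝ)/p + (k:ℝ)/p) / Real.Gamma ((1:ℝ)/p) := by
    intro k hk
    rw [Finset.mem_Icc] at hk
    have hk1 : (0:ℝ) < k := by exact_mod_cast (by omega : 0 < k)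
    have hb0 : 0 < (k:ℝ)/p := div_pos hk1 hp0
    have hb1 : (k:ℝ)/p < 1 := by
      rw [div_lt_one hp0]
      exact_mod_cast (by omega : k < p)
    exact tendsto_nhds_unique (hF k (Finset.mem_Icc.mpr hk))
      (prod_tendsto_gamma ((1:ℝ)/p) ((k:ℝ)/p) (by positivity) hb0 hb1)
  have hΓp : 0 < Real.Gamma ((1:ℝ)/p) := Real.Gamma_pos_of_pos (by positivity)
  -- the product of 1/F k
  have hT0 : ∀ j : ℕ, 0 < Real.Gamma ((j:ℝ)/p + 1/p) := fun j =>
    Real.Gamma_pos_of_pos (by positivity)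
  have hstep1 : ∏ k ∈ Finset.Icc 1 (p-2), (1 / F k) =
      Real.Gamma ((1:ℝ)/p) ^ (p-2) /
        ((∏ k ∈ Finset.Icc 1 (p-2), Real.Gamma (1 - (k:ℝ)/p)) *
         (∏ k ∈ Finset.Icc 1 (p-2), Real.Gamma ((1:ℝ)/p + (k:ℝ)/p))) := by
    have hc : (Finset.Icc 1 (p-2)).card = p - 2 := by rw [Nat.card_Icc]; omega
    rw [Finset.prod_congr rfl (fun k hk => by rw [hFk k hk, one_div_div]),
      Finset.prod_div_distrib, Finset.prod_const, hc, Finset.prod_mul_distrib]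
  -- reindex the two products
  have hD1 : ∏ k ∈ Finset.Icc 1 (p-2), Real.Gamma (1 - (k:ℝ)/p)
      = ∏ j ∈ Finset.Icc 2 (p-1), Real.Gamma ((j:ℝ)/p) := by
    refine Finset.prod_nbij' (fun k => p - k) (fun j => p - j) ?_ ?_ ?_ ?_ ?_
    · intro a ha; simp only [Finset.mem_Icc] at *; omega
    · intro a ha; simp only [Finset.mem_Icc] at *; omega
    · intro a ha; simp only [Finset.mem_Icc] at ha; beta_reduce; omega
    · intro a ha; simp only [Finset.mem_Icc] at ha; beta_reduce; omega
    · intro a ha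
      rw [Finset.mem_Icc] at ha
      congr 1
      rw [Nat.cast_sub (by omega), sub_div, div_self hp0.ne']
  have hD2 : ∏ k ∈ Finset.Icc 1 (p-2), Real.Gamma ((1:ℝ)/p + (k:ℝ)/p)
      = ∏ j ∈ Finset.Icc 2 (p-1), Real.Gamma ((j:ℝ)/p) := by
    refine Finset.prod_nbij' (fun k => k + 1) (fun j => j - 1) ?_ ?_ ?_ ?_ ?_
    · intro a ha; simp only [Finset.mem_Icc] at *; omega
    · intro a ha; simp only [Finset.mem_Icc] at *; omega
    · intro a ha; simp only [Finset.mem_Icc] at ha; beta_reduce; omega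
    · intro a ha; simp only [Finset.mem_Icc] at ha; beta_reduce; omega
    · intro a ha
      rw [Finset.mem_Icc] at ha
      congr 1
      push_cast
      ring
  -- the full product over Icc 1 (p-1)
  have hins : Finset.Icc 1 (p-1) = insert 1 (Finset.Icc 2 (p-1)) := by
    ext a; simp only [Finset.mem_Icc, Finset.mem_insert]; omega
  have hE : ∏ j ∈ Finset.Icc 1 (p-1), Real.Gamma ((j:ℝ)/p)
      = Real.Gamma ((1:ℝ)/p) * ∏ j ∈ Finset.Icc 2 (p-1), Real.Gamma ((j:ℝ)/p) := by
    rw [hins, Finset.prod_insert (by simp)]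
    norm_num
  -- square of full product
  have hEsq : (∏ j ∈ Finset.Icc 1 (p-1), Real.Gamma ((j:ℝ)/p))^2 = (2*π)^(p-1)/p := by
    have h1 : ∏ j ∈ Finset.Icc 1 (p-1), Real.Gamma ((j:ℝ)/p)
        = ∏ j ∈ Finset.Icc 1 (p-1), Real.Gamma (1 - (j:ℝ)/p) := by
      refine Finset.prod_nbij' (fun k => p - k) (fun j => p - j) ?_ ?_ ?_ ?_ ?_
      · intro a ha; simp only [Finset.mem_Icc] at *; omega
      · intro a ha; simp only [Finset.mem_Icc] at *; omega
      · intro a ha; simp only [Finset.mem_Icc] at ha; beta_reduce; omega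
      · intro a ha; simp only [Finset.mem_Icc] at ha; beta_reduce; omega
      · intro a ha
        rw [Finset.mem_Icc] at ha
        congr 1
        rw [Nat.cast_sub (by omega), sub_div, div_self hp0.ne']
        ring
    rw [sq]
    nth_rewrite 2 [h1]
    rw [← Finset.prod_mul_distrib]
    have h2 : ∀ j ∈ Finset.Icc 1 (p-1),
        Real.Gamma ((j:ℝ)/p) * Real.Gamma (1 - (j:ℝ)/p) = (2*π) / (2 * Real.sin (π * j / p)) := by
      intro j hj
      rw [Real.Gamma_mul_Gamma_one_sub, mul_div_mul_left _ _ (two_ne_zero' ℝ)]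
      congr 2
      ring
    rw [Finset.prod_congr rfl h2, Finset.prod_div_distrib, Finset.prod_const,
      two_sin_prod p (by omega), Nat.card_Icc]
    norm_num
  -- positivity facts
  have hTpos : 0 < ∏ j ∈ Finset.Icc 2 (p-1), Real.Gamma ((j:ℝ)/p) := by
    refine Finset.prod_pos fun j hj => Real.Gamma_pos_of_pos ?_
    rw [Finset.mem_Icc] at hj
    have : (0:ℝ) < j := by exact_mod_cast (by omega : 0 < j)
    positivity
  -- final assembly
  set G := Real.Gamma ((1:ℝ)/p) with hGdef
  set T := ∏ j ∈ Finset.Icc 2 (p-1), Real.Gamma ((j:ℝ)/p) with hTdef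
  rw [hstep1, hD1, hD2]
  rw [hE] at hEsq
  have hfin : (2*π)^(p-1)/(p:ℝ) = G^2 * T^2 := by
    rw [← hEsq]; ring
  rw [hfin]
  obtain ⟨q, rfl⟩ : ∃ q, p = q + 2 := ⟨p - 2, by omega⟩
  rw [Nat.add_sub_cancel]
  have hT : T ≠ 0 := hTpos.ne'
  field_simp
  ring
end

section
/- For all real x, sin(πx) = ∏_{k=1}^∞ (2/(2k-1))²·(k-x)(k-1+x), in the sense that the partial products converge to sin(πx) for 0 < x < 1. -/
open Real Filter Finset

lemma step_ident (x N : ℝ) (h1 : 2*N+1 ≠ 0) (h2 : 2*N+2 ≠ 0) (h3 : N+1 ≠ 0) :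
    ((1:ℝ) - (2*(x-1/2))^2/(2*N+1)^2) * ((1:ℝ) - (2*(x-1/2))^2/(2*N+2)^2)
      = ((1:ℝ) - (x-1/2)^2/(N+1)^2) * ((2/(2*(N+1)-1))^2 * ((N+1-x)*(N+1-1+x))) := by
  have h4 : 2*(N+1)-1 ≠ 0 := by intro h; apply h1; linarith
  field_simp
  ring

lemma key_ident (x : ℝ) (m : ℕ) :
    π * (2 * (x - 1/2)) * ∏ j ∈ Finset.range (2*m), ((1:ℝ) - (2*(x-1/2))^2 / ((j:ℝ)+1)^2)
      = 2 * (π * (x - 1/2) * ∏ j ∈ Finset.range m, ((1:ℝ) - (x-1/2)^2 / ((j:ℝ)+1)^2))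
        * ∏ k ∈ Finset.Icc 1 m, (2 / (2 * (k : ℝ) - 1)) ^ 2 * ((k - x) * (k - 1 + x)) := by
  induction m with
  | zero => simp; ring
  | succ n ih =>
    rw [show 2*(n+1) = (2*n)+1+1 by ring, Finset.prod_range_succ, Finset.prod_range_succ,
      Finset.prod_range_succ, show Finset.Icc 1 (n+1) = insert (n+1) (Finset.Icc 1 n) by
        exact (Finset.insert_Icc_right_eq_Icc_add_one (by omega)).symm, Finset.prod_insert (by simp)]
    have h1 : 2*(n:ℝ)+1 ≠ 0 := by positivity
    have h2 : 2*(n:ℝ)+2 ≠ 0 := by positivity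
    have h3 : (n:ℝ)+1 ≠ 0 := by positivity
    have hs := step_ident x (n:ℝ) h1 h2 h3
    push_cast
    linear_combination
      (((1:ℝ) - (2*(x-1/2))^2/(2*(n:ℝ)+1)^2) * ((1:ℝ) - (2*(x-1/2))^2/(2*(n:ℝ)+2)^2)) * ih
      + (2 * (π * (x - 1/2) * ∏ j ∈ Finset.range n, ((1:ℝ) - (x-1/2)^2 / ((j:ℝ)+1)^2))
        * ∏ k ∈ Finset.Icc 1 n, (2 / (2 * (k : ℝ) - 1)) ^ 2 * ((k - x) * (k - 1 + x))) * hs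

/-- For `0 < x < 1`, the partial products of
`∏_{k=1}^∞ (2/(2k-1))²·(k-x)(k-1+x)` converge to `sin(πx)`. -/
theorem sin_pi_infinite_product (x : ℝ) (hx0 : 0 < x) (hx1 : x < 1) :
    Tendsto (fun m : ℕ => ∏ k ∈ Finset.Icc 1 m,
        (2 / (2 * (k : ℝ) - 1)) ^ 2 * ((k - x) * (k - 1 + x))) atTop
      (nhds (Real.sin (Real.pi * x))) := by
  obtain ⟨y, hy⟩ : ∃ y : ℝ, y = x - 1/2 := ⟨_, rfl⟩
  rcases eq_or_ne y 0 with h0 | h0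
  · have hx : x = 1/2 := by rw [hy] at h0; have := sub_eq_zero.mp (by linarith : x - 1/2 = 0); linarith
    subst hx
    have he : (fun m : ℕ => ∏ k ∈ Finset.Icc 1 m,
        (2 / (2 * (k : ℝ) - 1)) ^ 2 * ((k - (1/2:ℝ)) * (k - 1 + 1/2))) = fun _ => (1:ℝ) := by
      funext m
      rw [Finset.prod_eq_one]
      intro k hk
      have hk1 : 1 ≤ k := (Finset.mem_Icc.mp hk).1
      have hne : (2 * (k:ℝ) - 1) ≠ 0 := by
        have : (1:ℝ) ≤ (k:ℝ) := by exact_mod_cast hk1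
        nlinarith
      field_simp
      ring
    rw [he, show π * (1/2) = π/2 by ring, Real.sin_pi_div_two]
    exact tendsto_const_nhds
  · have hylt : y < 1/2 := by rw [hy]; linarith
    have hygt : -(1/2) < y := by rw [hy]; linarith
    have hsin : Real.sin (π * y) ≠ 0 := by
      rcases lt_or_gt_of_ne h0 with hneg | hpos
      · have h1 : Real.sin (π * (-y)) > 0 := by
          apply Real.sin_pos_of_pos_of_lt_pi
          · nlinarith [Real.pi_pos]
          · have h2 := mul_lt_mul_of_pos_left (show -y < 1 by linarith) Real.pi_pos
            simpa using h2
        rw [mul_neg, Real.sin_neg] at h1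
        linarith
      · have h1 : Real.sin (π * y) > 0 := by
          apply Real.sin_pos_of_pos_of_lt_pi
          · exact mul_pos Real.pi_pos hpos
          · have h2 := mul_lt_mul_of_pos_left (show y < 1 by linarith) Real.pi_pos
            simpa using h2
        linarith
    have h2m : Tendsto (fun m : ℕ => 2*m) atTop atTop :=
      tendsto_atTop_mono (fun n => by simp; omega) tendsto_id
    have hA : Tendsto (fun m : ℕ => π * (2*y) *
        ∏ j ∈ Finset.range (2*m), ((1:ℝ) - (2*y)^2 / ((j:ℝ)+1)^2)) atTop
        (nhds (Real.sin (π * (2*y)))) :=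
      (Real.tendsto_euler_sin_prod (2*y)).comp h2m
    have hB : Tendsto (fun m : ℕ => π * y *
        ∏ j ∈ Finset.range m, ((1:ℝ) - y^2 / ((j:ℝ)+1)^2)) atTop
        (nhds (Real.sin (π * y))) := Real.tendsto_euler_sin_prod y
    have hBne : ∀ m : ℕ, π * y * ∏ j ∈ Finset.range m, ((1:ℝ) - y^2 / ((j:ℝ)+1)^2) ≠ 0 := by
      intro m
      apply mul_ne_zero (mul_ne_zero Real.pi_ne_zero h0)
      apply Finset.prod_ne_zero_iff.mpr
      intro j _
      have hj : (1:ℝ) ≤ ((j:ℝ)+1)^2 := by nlinarith [Nat.cast_nonneg (α := ℝ) j]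
      have hy2 : y^2 < 1 := by nlinarith
      have : y^2 / ((j:ℝ)+1)^2 < 1 := by
        rw [div_lt_one (by positivity)]; linarith
      linarith
    have hquot := hA.div (hB.const_mul 2) (by
      simpa using mul_ne_zero (two_ne_zero) hsin)
    have hquot2 : Tendsto (fun m : ℕ => ∏ k ∈ Finset.Icc 1 m,
        (2 / (2 * (k : ℝ) - 1)) ^ 2 * ((k - x) * (k - 1 + x))) atTop
        (nhds (Real.sin (π * (2*y)) / (2 * Real.sin (π * y)))) := by
      refine hquot.congr fun m => ?_
      show (π * (2*y) * ∏ j ∈ Finset.range (2*m), ((1:ℝ) - (2*y)^2 / ((j:ℝ)+1)^2)) /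
          (2 * (π * y * ∏ j ∈ Finset.range m, ((1:ℝ) - y^2 / ((j:ℝ)+1)^2))) = _
      rw [hy, key_ident x m, ← hy]
      exact mul_div_cancel_left₀ _ (by simpa using mul_ne_zero two_ne_zero (hBne m))
    convert hquot2 using 2
    rw [show π * (2*y) = 2 * (π * y) by ring, Real.sin_two_mul,
      eq_div_iff (by simpa using mul_ne_zero (two_ne_zero) hsin),
      show π * y = -(π/2 - π * x) by rw [hy]; ring, Real.cos_neg, Real.cos_pi_div_two_sub]
    ring
end

section
/- For 0 < x < 1/2, tan(πx) = ∏_{n=1}^∞ ((2n-2+2x)(2n-2x))/((2n-1)² - (2x)²). -/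
set_option maxHeartbeats 1000000

open Real Filter Finset

/-- For `0 < x < 1/2`, `tan(πx) = ∏_{n=1}^∞ ((2n-2+2x)(2n-2x))/((2n-1)² - (2x)²)`. -/
theorem tan_pi_infinite_product (x : ℝ) (hx0 : 0 < x) (hx1 : x < 1/2) :
    Tendsto (fun m : ℕ => ∏ n ∈ Finset.Icc 1 m,
        (2 * (n : ℝ) - 2 + 2 * x) * (2 * n - 2 * x) / ((2 * n - 1) ^ 2 - (2 * x) ^ 2)) atTop
      (nhds (Real.tan (Real.pi * x))) := by
  have hfacx : ∀ j : ℕ, (0:ℝ) < 1 - x^2/((j:ℝ)+1)^2 := by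
    intro j
    rw [sub_pos, div_lt_one (by positivity)]
    have : (1:ℝ) ≤ ((j:ℝ)+1) := by have := Nat.cast_nonneg (α:=ℝ) j; linarith
    nlinarith
  have hfac2x : ∀ j : ℕ, (0:ℝ) < 1 - (2*x)^2/((j:ℝ)+1)^2 := by
    intro j
    rw [sub_pos, div_lt_one (by positivity)]
    have : (1:ℝ) ≤ ((j:ℝ)+1) := by have := Nat.cast_nonneg (α:=ℝ) j; linarith
    nlinarith
  have key : ∀ m : ℕ, (∏ n ∈ Finset.Icc 1 m,
        (2 * (n : ℝ) - 2 + 2 * x) * (2 * n - 2 * x) / ((2 * n - 1) ^ 2 - (2 * x) ^ 2))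
        * (π * (π * (2*x) * ∏ j ∈ range (2*m), (1 - (2*x)^2/((j:ℝ)+1)^2))) * ((m:ℝ)+x)
      = 2 * (∏ i ∈ range m, ((2:ℝ)*i+2)/(2*i+1)*((2*i+2)/(2*i+3)))
        * (2*(m:ℝ)+1)
        * (π * x * ∏ j ∈ range m, (1 - x^2/((j:ℝ)+1)^2))^2 := by
    intro m
    induction m with
    | zero => simp; ring
    | succ m ih =>
      rw [Finset.prod_Icc_succ_top (Nat.le_add_left 1 m)]
      have h2 : 2*(m+1) = (2*m)+1+1 := by ring
      rw [prod_range_succ, h2, prod_range_succ, prod_range_succ, prod_range_succ]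
      push_cast at ih ⊢
      set W := ∏ i ∈ range m, ((2:ℝ)*i+2)/(2*i+1)*((2*i+2)/(2*i+3)) with hWdef
      set E := ∏ j ∈ range m, (1 - x^2/((j:ℝ)+1)^2) with hEdef
      set B := ∏ j ∈ range (2*m), (1 - (2*x)^2/((j:ℝ)+1)^2) with hBdef
      set P := ∏ n ∈ Finset.Icc 1 m,
        (2 * (n : ℝ) - 2 + 2 * x) * (2 * n - 2 * x) / ((2 * n - 1) ^ 2 - (2 * x) ^ 2) with hPdef
      have ht1 : (1 - (2*x)^2/((2*(m:ℝ))+1)^2) ≠ 0 := by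
        have := hfac2x (2*m); push_cast at this; nlinarith [this]
      have ht2 : (1 - (2*x)^2/((2*(m:ℝ))+1+1)^2) ≠ 0 := by
        have := hfac2x (2*m+1); push_cast at this; nlinarith [this]
      have hden : ((2*((m:ℝ)+1) - 1)^2 - (2*x)^2) ≠ 0 := by
        have hm : (0:ℝ) ≤ (m:ℝ) := Nat.cast_nonneg m
        nlinarith
      have h21 : ((2:ℝ)*m+1) ≠ 0 := by positivity
      have h23 : ((2:ℝ)*m+3) ≠ 0 := by positivity
      have hmx : ((m:ℝ)+x) ≠ 0 := by positivity
      have hP : P = (2*W*(2*(m:ℝ)+1)*(π*x*E)^2) / ((π*(π*(2*x)*B))*((m:ℝ)+x)) := by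
        rw [eq_div_iff (by
          have h := Real.pi_pos
          have hB : 0 < B := Finset.prod_pos (fun j _ => hfac2x j)
          positivity)]
        linarith [ih]
      rw [hP]
      have hpi : (π:ℝ) ≠ 0 := Real.pi_ne_zero
      have hBne : B ≠ 0 := (Finset.prod_pos (fun j _ => hfac2x j)).ne'
      field_simp
      rw [div_eq_iff (by rw [← mul_pow]; exact hden)]
      ring
  -- limits
  have hW := Real.tendsto_prod_pi_div_two
  have hE := Real.tendsto_euler_sin_prod x
  have h2m : Tendsto (fun m : ℕ => 2*m) atTop atTop :=
    tendsto_atTop_atTop_of_monotone (fun a b h => by omega) (fun b => ⟨b, by omega⟩)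
  have hE2 : Tendsto (fun m : ℕ => π * (2*x) * ∏ j ∈ range (2*m),
      (1 - (2*x)^2/((j:ℝ)+1)^2)) atTop (nhds (sin (π*(2*x)))) :=
    (Real.tendsto_euler_sin_prod (2*x)).comp h2m
  have hd : Tendsto (fun m : ℕ => (m:ℝ)+x) atTop atTop :=
    tendsto_natCast_atTop_atTop.atTop_add tendsto_const_nhds
  have hratio : Tendsto (fun m : ℕ => (2*(m:ℝ)+1)/((m:ℝ)+x)) atTop (nhds 2) := by
    have h0 : Tendsto (fun m : ℕ => 2 + (1-2*x)/((m:ℝ)+x)) atTop (nhds (2+0)) :=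
      (tendsto_const_nhds.div_atTop hd).const_add 2
    rw [add_zero] at h0
    refine h0.congr (fun m => ?_)
    have hmx : ((m:ℝ)+x) ≠ 0 := by positivity
    field_simp
    ring
  have hsin2 : (0:ℝ) < sin (π*(2*x)) := by
    apply Real.sin_pos_of_pos_of_lt_pi
    · positivity
    · nlinarith [Real.pi_pos]
  have hg : Tendsto (fun m : ℕ =>
      (2 * (∏ i ∈ range m, ((2:ℝ)*i+2)/(2*i+1)*((2*i+2)/(2*i+3))))
        * ((2*(m:ℝ)+1)/((m:ℝ)+x))
        * (π * x * ∏ j ∈ range m, (1 - x^2/((j:ℝ)+1)^2))^2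
        / (π * (π * (2*x) * ∏ j ∈ range (2*m), (1 - (2*x)^2/((j:ℝ)+1)^2)))) atTop
      (nhds ((2*(π/2)) * 2 * (sin (π*x))^2 / (π * sin (π*(2*x))))) := by
    exact ((((hW.const_mul 2).mul hratio).mul (hE.pow 2)).div
      (tendsto_const_nhds.mul hE2) (by positivity))
  have hlim : (2*(π/2)) * 2 * (sin (π*x))^2 / (π * sin (π*(2*x))) = Real.tan (π*x) := by
    have h2x : π*(2*x) = 2*(π*x) := by ring
    rw [h2x, Real.sin_two_mul, Real.tan_eq_sin_div_cos]
    have hc : (0:ℝ) < Real.cos (π*x) := by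
      apply Real.cos_pos_of_mem_Ioo
      constructor
      · nlinarith [Real.pi_pos]
      · nlinarith [Real.pi_pos]
    have hs : (0:ℝ) < Real.sin (π*x) := by
      apply Real.sin_pos_of_pos_of_lt_pi
      · positivity
      · nlinarith [Real.pi_pos]
    have hpi : (π:ℝ) ≠ 0 := Real.pi_ne_zero
    field_simp
  rw [← hlim]
  refine hg.congr (fun m => ?_)
  have hB : (0:ℝ) < ∏ j ∈ range (2*m), (1 - (2*x)^2/((j:ℝ)+1)^2) :=
    Finset.prod_pos (fun j _ => hfac2x j)
  have hpi := Real.pi_pos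
  have hmx : (0:ℝ) < (m:ℝ)+x := by positivity
  have h := key m
  set W := ∏ i ∈ range m, ((2:ℝ)*i+2)/(2*i+1)*((2*i+2)/(2*i+3)) with hWdef
  set E := ∏ j ∈ range m, (1 - x^2/((j:ℝ)+1)^2) with hEdef
  set B := ∏ j ∈ range (2*m), (1 - (2*x)^2/((j:ℝ)+1)^2) with hBdef
  set P := ∏ n ∈ Finset.Icc 1 m,
    (2 * (n : ℝ) - 2 + 2 * x) * (2 * n - 2 * x) / ((2 * n - 1) ^ 2 - (2 * x) ^ 2) with hPdef
  have hD : (π * (π * (2*x) * B)) ≠ 0 := by positivity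
  calc 2 * W * ((2*(m:ℝ)+1)/((m:ℝ)+x)) * (π * x * E)^2 / (π * (π * (2*x) * B))
      = (2 * W * (2*(m:ℝ)+1) * (π * x * E)^2) / ((π * (π * (2*x) * B)) * ((m:ℝ)+x)) := by
        rw [eq_div_iff (by positivity)]
        field_simp
    _ = (P * (π * (π * (2*x) * B)) * ((m:ℝ)+x)) / ((π * (π * (2*x) * B)) * ((m:ℝ)+x)) := by
        rw [h]
    _ = P := by
        field_simp
end

section
/- For 0 < x < 1, 0 < y < 1, and every positive integer m, B(x,y) > (1/y)·∏_{k=1}^m k(k-1+x+y)/((k-1+x)(k+y)). -/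
open Real Finset

lemma gamma_ineq (x y t : ℝ) (hx0 : 0 < x) (hx1 : x < 1) (hy0 : 0 < y) (hy1 : y < 1)
    (ht : 0 ≤ t) :
    Real.Gamma (t + 1) * Real.Gamma (t + x + y) ≤ Real.Gamma (t + x) * Real.Gamma (t + 1 + y) := by
  have hden : 0 < 1 + y - x := by linarith
  obtain ⟨θ, hθdef⟩ : ∃ θ : ℝ, θ = y / (1 + y - x) := ⟨_, rfl⟩
  have hθden : θ * (1 + y - x) = y := by rw [hθdef]; field_simp
  have hθ0 : 0 ≤ θ := by rw [hθdef]; positivity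
  have hθ1 : θ ≤ 1 := by rw [hθdef]; rw [div_le_one hden]; linarith
  have ha0 : (0:ℝ) < t + x := by linarith
  have hb0 : (0:ℝ) < t + 1 + y := by linarith
  have h1 := Real.convexOn_log_Gamma.2 (Set.mem_Ioi.2 ha0) (Set.mem_Ioi.2 hb0)
    hθ0 (by linarith : (0:ℝ) ≤ 1 - θ) (by ring)
  have h2 := Real.convexOn_log_Gamma.2 (Set.mem_Ioi.2 ha0) (Set.mem_Ioi.2 hb0)
    (by linarith : (0:ℝ) ≤ 1 - θ) hθ0 (by ring)
  simp only [smul_eq_mul, Function.comp_apply] at h1 h2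
  have hc : θ * (t + x) + (1 - θ) * (t + 1 + y) = t + 1 := by nlinarith [hθden]
  have hd : (1 - θ) * (t + x) + θ * (t + 1 + y) = t + x + y := by nlinarith [hθden]
  rw [hc] at h1
  rw [hd] at h2
  have g1 : 0 < Real.Gamma (t+1) := Real.Gamma_pos_of_pos (by linarith)
  have g2 : 0 < Real.Gamma (t+x+y) := Real.Gamma_pos_of_pos (by linarith)
  have g3 : 0 < Real.Gamma (t+x) := Real.Gamma_pos_of_pos ha0
  have g4 : 0 < Real.Gamma (t+1+y) := Real.Gamma_pos_of_pos hb0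
  calc Real.Gamma (t+1) * Real.Gamma (t+x+y)
      = Real.exp (Real.log (Real.Gamma (t+1)) + Real.log (Real.Gamma (t+x+y))) := by
        rw [Real.exp_add, Real.exp_log g1, Real.exp_log g2]
    _ ≤ Real.exp (Real.log (Real.Gamma (t+x)) + Real.log (Real.Gamma (t+1+y))) := by
        apply Real.exp_le_exp.2; linarith
    _ = Real.Gamma (t+x) * Real.Gamma (t+1+y) := by
        rw [Real.exp_add, Real.exp_log g3, Real.exp_log g4]

lemma prod_eq (x y : ℝ) (hx0 : 0 < x) (hy0 : 0 < y) (m : ℕ) :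
    ∏ k ∈ Finset.Icc 1 m, ((k : ℝ) * (k - 1 + x + y) / ((k - 1 + x) * (k + y))) =
      y * (Real.Gamma x * Real.Gamma y / Real.Gamma (x + y)) *
        (Real.Gamma (m + 1) * Real.Gamma (m + x + y) /
          (Real.Gamma (m + x) * Real.Gamma (m + 1 + y))) := by
  induction m with
  | zero =>
      simp only [Nat.cast_zero, zero_add, Finset.Icc_self]
      rw [show Finset.Icc 1 0 = (∅ : Finset ℕ) by rfl]
      rw [Real.Gamma_one]
      have h1 : Real.Gamma (1 + y) = y * Real.Gamma y := by
        rw [add_comm, Real.Gamma_add_one hy0.ne']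
      rw [h1]
      have gx := Real.Gamma_pos_of_pos hx0
      have gy := Real.Gamma_pos_of_pos hy0
      have gxy := Real.Gamma_pos_of_pos (by linarith : (0:ℝ) < x + y)
      field_simp
      ring
  | succ n ih =>
      rw [Finset.prod_Icc_succ_top (Nat.one_le_iff_ne_zero.2 (Nat.succ_ne_zero n)), ih]
      have hn1 : ((n:ℝ) + 1) ≠ 0 := by positivity
      have hxy : ((n:ℝ) + x + y) ≠ 0 := by positivity
      have hnx : ((n:ℝ) + x) ≠ 0 := by positivity
      have hny : ((n:ℝ) + 1 + y) ≠ 0 := by positivity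
      have e1 : Real.Gamma ((n:ℝ) + 1 + 1) = ((n:ℝ)+1) * Real.Gamma ((n:ℝ)+1) :=
        Real.Gamma_add_one hn1
      have e2 : Real.Gamma ((n:ℝ) + 1 + x + y) = ((n:ℝ)+x+y) * Real.Gamma ((n:ℝ)+x+y) := by
        rw [show (n:ℝ) + 1 + x + y = ((n:ℝ) + x + y) + 1 by ring, Real.Gamma_add_one hxy]
      have e3 : Real.Gamma ((n:ℝ) + 1 + x) = ((n:ℝ)+x) * Real.Gamma ((n:ℝ)+x) := by
        rw [show (n:ℝ) + 1 + x = ((n:ℝ) + x) + 1 by ring, Real.Gamma_add_one hnx]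
      have e4 : Real.Gamma ((n:ℝ) + 1 + 1 + y) = ((n:ℝ)+1+y) * Real.Gamma ((n:ℝ)+1+y) := by
        rw [show (n:ℝ) + 1 + 1 + y = ((n:ℝ) + 1 + y) + 1 by ring, Real.Gamma_add_one hny]
      push_cast
      rw [e1, e2, e3, e4]
      have g1 : 0 < Real.Gamma ((n:ℝ)+1) := Real.Gamma_pos_of_pos (by positivity)
      have g2 : 0 < Real.Gamma ((n:ℝ)+x+y) := Real.Gamma_pos_of_pos (by positivity)
      have g3 : 0 < Real.Gamma ((n:ℝ)+x) := Real.Gamma_pos_of_pos (by positivity)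
      have g4 : 0 < Real.Gamma ((n:ℝ)+1+y) := Real.Gamma_pos_of_pos (by positivity)
      field_simp
      ring_nf
      field_simp
      ring

/-- For `0 < x < 1`, `0 < y < 1` and every positive integer `m`,
`B(x,y) > (1/y)·∏_{k=1}^m k(k-1+x+y)/((k-1+x)(k+y))`. -/
theorem beta_gt_truncation (x y : ℝ) (hx0 : 0 < x) (hx1 : x < 1) (hy0 : 0 < y) (hy1 : y < 1)
    (m : ℕ) (hm : 1 ≤ m) :
    Real.Gamma x * Real.Gamma y / Real.Gamma (x + y) >
      (1 / y) * ∏ k ∈ Finset.Icc 1 m,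
        (k : ℝ) * (k - 1 + x + y) / ((k - 1 + x) * (k + y)) := by
  have gx := Real.Gamma_pos_of_pos hx0
  have gy := Real.Gamma_pos_of_pos hy0
  have gxy := Real.Gamma_pos_of_pos (by linarith : (0:ℝ) < x + y)
  have hm0 : (1:ℝ) ≤ (m:ℝ) := Nat.one_le_cast.2 hm
  have hBpos : 0 < Real.Gamma x * Real.Gamma y / Real.Gamma (x + y) := by positivity
  have g3 : 0 < Real.Gamma ((m:ℝ)+1+x) := Real.Gamma_pos_of_pos (by positivity)
  have g4 : 0 < Real.Gamma ((m:ℝ)+1+1+y) := Real.Gamma_pos_of_pos (by positivity)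
  have hR1 : Real.Gamma ((m:ℝ) + 1 + 1) * Real.Gamma ((m:ℝ) + 1 + x + y) /
      (Real.Gamma ((m:ℝ) + 1 + x) * Real.Gamma ((m:ℝ) + 1 + 1 + y)) ≤ 1 := by
    rw [div_le_one (by positivity)]
    exact gamma_ineq x y ((m:ℝ)+1) hx0 hx1 hy0 hy1 (by positivity)
  have hP1 := prod_eq x y hx0 hy0 (m+1)
  rw [Finset.prod_Icc_succ_top (Nat.le_succ_of_le hm)] at hP1
  push_cast at hP1
  have hPm_pos : 0 < ∏ k ∈ Finset.Icc 1 m,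
      ((k : ℝ) * (k - 1 + x + y) / ((k - 1 + x) * (k + y))) := by
    apply Finset.prod_pos
    intro k hk
    have hk1' : (1:ℝ) ≤ (k:ℝ) := Nat.one_le_cast.2 (Finset.mem_Icc.1 hk).1
    have h1 : (0:ℝ) < (k:ℝ) - 1 + x := by linarith
    have h2 : (0:ℝ) < (k:ℝ) - 1 + x + y := by linarith
    have h3 : (0:ℝ) < (k:ℝ) + y := by linarith
    have h4 : (0:ℝ) < (k:ℝ) := by linarith
    positivity
  have hden_pos : (0:ℝ) < ((m:ℝ) + 1 - 1 + x) * ((m:ℝ) + 1 + y) := by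
    have h1 : (0:ℝ) < (m:ℝ) + 1 - 1 + x := by linarith
    have h2 : (0:ℝ) < (m:ℝ) + 1 + y := by linarith
    exact mul_pos h1 h2
  have htgt : 1 < ((m:ℝ) + 1) * ((m:ℝ) + 1 - 1 + x + y) /
      (((m:ℝ) + 1 - 1 + x) * ((m:ℝ) + 1 + y)) := by
    rw [lt_div_iff₀ hden_pos]
    nlinarith
  calc (1/y) * ∏ k ∈ Finset.Icc 1 m, ((k : ℝ) * (k - 1 + x + y) / ((k - 1 + x) * (k + y)))
      < (1/y) * ((∏ k ∈ Finset.Icc 1 m, ((k : ℝ) * (k - 1 + x + y) / ((k - 1 + x) * (k + y)))) *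
          (((m:ℝ) + 1) * ((m:ℝ) + 1 - 1 + x + y) /
            (((m:ℝ) + 1 - 1 + x) * ((m:ℝ) + 1 + y)))) := by
        rw [mul_lt_mul_iff_right₀ (by positivity : (0:ℝ) < 1/y)]
        nlinarith
    _ = (Real.Gamma x * Real.Gamma y / Real.Gamma (x + y)) *
          (Real.Gamma ((m:ℝ) + 1 + 1) * Real.Gamma ((m:ℝ) + 1 + x + y) /
            (Real.Gamma ((m:ℝ) + 1 + x) * Real.Gamma ((m:ℝ) + 1 + 1 + y))) := by
        rw [hP1]
        field_simp
    _ ≤ Real.Gamma x * Real.Gamma y / Real.Gamma (x + y) :=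
        mul_le_of_le_one_right hBpos.le hR1
end

section
/- Let Ω_n = π^{n/2}/Γ(1+n/2) be the volume of the unit ball in ℝ^n. Then for every positive integer n, Ω_{n-1}/Ω_n = n/(2·f(n/2,1/2)), where f(x,1/2) = ∏_{k=1}^∞ k(x+k-1)/((k-1/2)(x+k-1/2)). -/
open Real Filter Finset

lemma aux_prod_eq (x : ℝ) (hx : 0 < x) (m : ℕ) (hm : 1 ≤ m) :
    (∏ k ∈ Finset.Icc 1 (m + 1),
        (k : ℝ) * (x + k - 1) / ((k - 1/2) * (x + k - 1/2))) =
      Real.GammaSeq (1/2) m * Real.GammaSeq (x + 1/2) m /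
        (Real.GammaSeq 1 m * Real.GammaSeq x m) := by
  have hm0 : (0:ℝ) < m := by exact_mod_cast hm
  have hprod : ∀ y : ℝ, 0 < y → 0 < ∏ j ∈ Finset.range (m+1), (y + j) := by
    intro y hy
    exact Finset.prod_pos fun j _ => by positivity
  have h1 := hprod (1/2) (by norm_num)
  have h2 := hprod (x + 1/2) (by linarith)
  have h3 := hprod 1 one_pos
  have h4 := hprod x hx
  rw [← Finset.Ico_add_one_right_eq_Icc, Finset.prod_Ico_eq_prod_range]
  simp only [Nat.succ_sub_one, Nat.add_sub_cancel]
  have hL : (∏ j ∈ Finset.range (m+1),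
      ((1 + j : ℕ) : ℝ) * (x + (1 + j : ℕ) - 1) / (((1 + j : ℕ) - 1/2) * (x + (1 + j : ℕ) - 1/2)))
      = (∏ j ∈ Finset.range (m+1), ((1:ℝ) + j)) * (∏ j ∈ Finset.range (m+1), (x + j)) /
        ((∏ j ∈ Finset.range (m+1), ((1/2:ℝ) + j)) * (∏ j ∈ Finset.range (m+1), (x + 1/2 + j))) := by
    rw [← Finset.prod_mul_distrib, ← Finset.prod_mul_distrib, ← Finset.prod_div_distrib]
    refine Finset.prod_congr rfl fun j _ => ?_
    push_cast
    ring_nf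
  rw [hL]
  unfold Real.GammaSeq
  have hpow : (m:ℝ) ^ (1/2 : ℝ) * (m:ℝ) ^ (x + 1/2) = (m:ℝ) ^ (1:ℝ) * (m:ℝ) ^ x := by
    rw [← Real.rpow_add hm0, ← Real.rpow_add hm0]
    ring_nf
  have hfact : ((Nat.factorial m : ℝ)) ≠ 0 := by positivity
  have hp1 : ((m:ℝ) ^ (1 : ℝ)) ≠ 0 := (Real.rpow_pos_of_pos hm0 _).ne'
  have hp4 : ((m:ℝ) ^ (x : ℝ)) ≠ 0 := (Real.rpow_pos_of_pos hm0 _).ne'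
  have key : ∀ a b c d p q r s F : ℝ, a ≠ 0 → b ≠ 0 → c ≠ 0 → d ≠ 0 → r ≠ 0 → s ≠ 0 →
      F ≠ 0 → p * q = r * s →
      c * d / (a * b) = p * F / a * (q * F / b) / (r * F / c * (s * F / d)) := by
    intro a b c d p q r s F ha hb hc hd hr hs hF hpq
    field_simp
    linear_combination (-1 : ℝ) * hpq
  exact key _ _ _ _ _ _ _ _ _ h1.ne' h2.ne' h3.ne' h4.ne' hp1 hp4 hfact hpow

/-- With `Ω_n = π^{n/2}/Γ(1+n/2)` the volume of the unit ball in `ℝⁿ`, for every positive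
integer `n`, `Ω_{n-1}/Ω_n = n/(2·f(n/2,1/2))` where
`f(x,1/2) = ∏_{k=1}^∞ k(x+k-1)/((k-1/2)(x+k-1/2))`. -/
theorem unit_ball_volume_ratio (n : ℕ) (hn : 1 ≤ n) (f : ℝ)
    (hf : Tendsto (fun m : ℕ => ∏ k ∈ Finset.Icc 1 m,
        (k : ℝ) * ((n : ℝ)/2 + k - 1) / ((k - 1/2) * ((n : ℝ)/2 + k - 1/2))) atTop (nhds f)) :
    (Real.pi ^ (((n : ℝ) - 1)/2) / Real.Gamma (1 + ((n : ℝ) - 1)/2)) /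
      (Real.pi ^ ((n : ℝ)/2) / Real.Gamma (1 + (n : ℝ)/2)) = n / (2 * f) := by
  set x : ℝ := (n:ℝ)/2 with hxdef
  have hx : 0 < x := by
    have : (1:ℝ) ≤ (n:ℝ) := by exact_mod_cast hn
    simp only [hxdef]; linarith
  -- identify f
  have h1 : Tendsto (fun m : ℕ => ∏ k ∈ Finset.Icc 1 (m+1),
      (k : ℝ) * (x + k - 1) / ((k - 1/2) * (x + k - 1/2))) atTop (nhds f) :=
    hf.comp (tendsto_add_atTop_nat 1)
  have hGx : 0 < Real.Gamma x := Real.Gamma_pos_of_pos hx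
  have hGx2 : 0 < Real.Gamma (x + 1/2) := Real.Gamma_pos_of_pos (by linarith)
  have h2 : Tendsto (fun m : ℕ => Real.GammaSeq (1/2) m * Real.GammaSeq (x + 1/2) m /
      (Real.GammaSeq 1 m * Real.GammaSeq x m)) atTop
      (nhds (Real.Gamma (1/2) * Real.Gamma (x + 1/2) / (Real.Gamma 1 * Real.Gamma x))) := by
    refine Tendsto.div (Tendsto.mul (Real.GammaSeq_tendsto_Gamma _)
      (Real.GammaSeq_tendsto_Gamma _)) (Tendsto.mul (Real.GammaSeq_tendsto_Gamma _)
      (Real.GammaSeq_tendsto_Gamma _)) ?_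
    rw [Real.Gamma_one]
    positivity
  have heq : f = Real.Gamma (1/2) * Real.Gamma (x + 1/2) / (Real.Gamma 1 * Real.Gamma x) := by
    refine tendsto_nhds_unique (h1.congr' ?_) h2
    filter_upwards [eventually_ge_atTop 1] with m hm
    exact aux_prod_eq x hx m hm
  rw [heq, Real.Gamma_one, Real.Gamma_one_half_eq, one_mul]
  -- algebra
  have hpi : (0:ℝ) < Real.pi := Real.pi_pos
  have hsq : (0:ℝ) < Real.sqrt Real.pi := Real.sqrt_pos.mpr hpi
  have hn2 : (1:ℝ) + ((n:ℝ) - 1)/2 = x + 1/2 := by simp only [hxdef]; ring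
  have hn3 : ((n:ℝ) - 1)/2 = x - 1/2 := by simp only [hxdef]; ring
  have hG1 : Real.Gamma (1 + (n:ℝ)/2) = x * Real.Gamma x := by
    rw [add_comm, ← hxdef, Real.Gamma_add_one hx.ne']
  rw [hn2, hn3, hG1]
  have hpow : Real.pi ^ (x - 1/2 : ℝ) = Real.pi ^ (x:ℝ) / Real.sqrt Real.pi := by
    rw [Real.rpow_sub hpi, Real.sqrt_eq_rpow]
  rw [hpow]
  have hnx : (n:ℝ) = 2 * x := by simp only [hxdef]; ring
  have hppos : (0:ℝ) < Real.pi ^ (x:ℝ) := Real.rpow_pos_of_pos hpi _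
  rw [hnx]
  field_simp
end

section
/- Let I_α = ∫_0^{π/2} (sin θ)^α dθ. Then for α > 0, I_α = (1/α)·∏_{k=1}^∞ k(α/2+k-1)/((k-1/2)(α/2+k-1/2)). -/
open Real Filter Finset

open intervalIntegral Set

noncomputable def J (β : ℝ) : ℝ := ∫ θ in (0:ℝ)..(π/2), Real.sin θ ^ β

lemma J_contOn {β : ℝ} (hβ : 0 ≤ β) :
    ContinuousOn (fun θ => Real.sin θ ^ β) (Set.uIcc (0:ℝ) (π/2)) := by
  have : Continuous fun x : ℝ => x ^ β := by
    refine continuous_iff_continuousAt.mpr fun x => ?_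
    exact Real.continuousAt_rpow_const x β (Or.inr hβ)
  exact (this.comp Real.continuous_sin).continuousOn

lemma J_integrable {β : ℝ} (hβ : 0 ≤ β) :
    IntervalIntegrable (fun θ => Real.sin θ ^ β) MeasureTheory.volume 0 (π/2) :=
  (J_contOn hβ).intervalIntegrable

lemma J_pos {β : ℝ} (hβ : 0 ≤ β) : 0 < J β := by
  refine intervalIntegral.intervalIntegral_pos_of_pos_on (J_integrable hβ) ?_ (by positivity)
  intro x hx
  have hs : 0 < Real.sin x := Real.sin_pos_of_pos_of_lt_pi hx.1 (hx.2.trans (by linarith [Real.pi_pos]))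
  positivity

lemma J_mono {β γ : ℝ} (hβ : 0 ≤ β) (hγ : β ≤ γ) : J γ ≤ J β := by
  refine intervalIntegral.integral_mono_on (by positivity) (J_integrable (hβ.trans hγ)) (J_integrable hβ) ?_
  intro x hx
  rcases eq_or_lt_of_le hx.1 with h0 | h0
  · simp only [← h0, Real.sin_zero]
    rcases eq_or_lt_of_le hβ with h | h
    · rcases eq_or_lt_of_le (hβ.trans hγ) with h' | h'
      · simp [← h, ← h']
      · simp [Real.zero_rpow (ne_of_gt h'), ← h]
    · rw [Real.zero_rpow (ne_of_gt h), Real.zero_rpow (ne_of_gt (lt_of_lt_of_le h hγ))]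
  · have hs : 0 < Real.sin x := Real.sin_pos_of_pos_of_lt_pi h0 (lt_of_le_of_lt hx.2 (by linarith [Real.pi_pos]))
    exact Real.rpow_le_rpow_of_exponent_ge hs (Real.sin_le_one x) hγ

lemma sin_hasDerivAt_rpow {p : ℝ} (hp : 1 ≤ p) (θ : ℝ) :
    HasDerivAt (fun x => Real.sin x ^ p) (p * Real.sin θ ^ (p - 1) * Real.cos θ) θ := by
  have h1 : HasDerivAt (fun y : ℝ => y ^ p) (p * Real.sin θ ^ (p - 1)) (Real.sin θ) :=
    Real.hasDerivAt_rpow_const (Or.inr hp)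
  exact h1.comp θ (Real.hasDerivAt_sin θ)

lemma J_rec {β : ℝ} (hβ : 0 ≤ β) : (β + 2) * J (β + 2) = (β + 1) * J β := by
  have pi2 : (0:ℝ) ≤ π/2 := by positivity
  have hder : ∀ θ ∈ Set.uIcc (0:ℝ) (π/2),
      HasDerivAt (fun x => Real.cos x * Real.sin x ^ (β+1))
        ((β+1) * Real.sin θ ^ β - (β+2) * Real.sin θ ^ (β+2)) θ := by
    intro θ hθ
    rw [Set.uIcc_of_le pi2] at hθ
    have hsn : 0 ≤ Real.sin θ :=
      Real.sin_nonneg_of_nonneg_of_le_pi hθ.1 (hθ.2.trans (by linarith [Real.pi_pos]))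
    have h1 := (Real.hasDerivAt_cos θ).mul (sin_hasDerivAt_rpow (p := β+1) (by linarith) θ)
    have e0 : β + 1 - 1 = β := by ring
    rw [e0] at h1
    refine h1.congr_deriv ?_
    have e1 : Real.sin θ ^ (β+1) = Real.sin θ ^ β * Real.sin θ := by
      rw [Real.rpow_add' hsn (by linarith), Real.rpow_one]
    have e2 : Real.sin θ ^ (β+2) = Real.sin θ ^ β * (Real.sin θ * Real.sin θ) := by
      rw [Real.rpow_add' hsn (by linarith), Real.rpow_two, sq]
    have hc : Real.cos θ * Real.cos θ = 1 - Real.sin θ * Real.sin θ := by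
      have := Real.cos_sq' θ
      nlinarith [this]
    rw [e1, e2]
    linear_combination ((β+1) * Real.sin θ ^ β) * hc
  have hint : IntervalIntegrable
      (fun θ => (β+1) * Real.sin θ ^ β - (β+2) * Real.sin θ ^ (β+2))
      MeasureTheory.volume 0 (π/2) :=
    ((J_integrable hβ).const_mul _).sub ((J_integrable (by linarith)).const_mul _)
  have key := intervalIntegral.integral_eq_sub_of_hasDerivAt hder hint
  rw [intervalIntegral.integral_sub ((J_integrable hβ).const_mul _)
        ((J_integrable (by linarith)).const_mul _),
      intervalIntegral.integral_const_mul, intervalIntegral.integral_const_mul] at key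
  have hend : Real.cos (π/2) * Real.sin (π/2) ^ (β+1) - Real.cos 0 * Real.sin 0 ^ (β+1) = 0 := by
    rw [Real.cos_pi_div_two, Real.sin_zero, Real.zero_rpow (by linarith), zero_mul, mul_zero,
      sub_zero]
  rw [hend] at key
  unfold J
  linarith [key]

lemma J_zero : J 0 = π/2 := by
  simp [J]

lemma J_one : J 1 = 1 := by
  have : J 1 = ∫ θ in (0:ℝ)..(π/2), Real.sin θ := by
    unfold J; congr 1; ext θ; exact Real.rpow_one _
  rw [this, integral_sin, Real.cos_pi_div_two, Real.cos_zero]; norm_num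

lemma J_nat_identity : ∀ n : ℕ, ((n:ℝ) + 1) * J n * J ((n:ℝ) + 1) = π/2 := by
  intro n
  induction n with
  | zero => simp [J_zero, J_one]
  | succ n ih =>
    have hrec := J_rec (β := (n:ℝ)) (Nat.cast_nonneg n)
    have hJpos : 0 < J ((n:ℝ) + 1) := J_pos (by positivity)
    push_cast
    have : ((n:ℝ) + 1 + 1) * J ((n:ℝ) + 1) * J ((n:ℝ) + 1 + 1) =
        ((n:ℝ) + 1) * J n * J ((n:ℝ) + 1) := by
      have e : (n:ℝ) + 1 + 1 = (n:ℝ) + 2 := by ring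
      rw [e]
      calc ((n:ℝ) + 2) * J ((n:ℝ) + 1) * J ((n:ℝ) + 2)
          = J ((n:ℝ) + 1) * (((n:ℝ) + 2) * J ((n:ℝ) + 2)) := by ring
        _ = J ((n:ℝ) + 1) * (((n:ℝ) + 1) * J n) := by rw [hrec]
        _ = ((n:ℝ) + 1) * J n * J ((n:ℝ) + 1) := by ring
    rw [this, ih]

lemma tendsto_ratio (a b : ℝ) :
    Tendsto (fun m : ℕ => ((m:ℝ) + a) / ((m:ℝ) + b)) atTop (nhds 1) := by
  have hb : Tendsto (fun m : ℕ => (m:ℝ) + b) atTop atTop :=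
    tendsto_atTop_add_const_right _ b tendsto_natCast_atTop_atTop
  have h0 : Tendsto (fun m : ℕ => (a - b) / ((m:ℝ) + b)) atTop (nhds 0) :=
    Tendsto.div_atTop tendsto_const_nhds hb
  have h1 : Tendsto (fun m : ℕ => 1 + (a - b) / ((m:ℝ) + b)) atTop (nhds 1) := by
    simpa using tendsto_const_nhds.add h0
  refine h1.congr' ?_
  filter_upwards [hb.eventually_gt_atTop 0] with m hm
  field_simp
  ring

lemma J_identity {β : ℝ} (hβ : 0 ≤ β) : (β + 1) * J β * J (β + 1) = π/2 := by
  have hshift : ∀ m : ℕ, (β + m + 1) * J (β + m) * J (β + m + 1)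
      = (β + 1) * J β * J (β + 1) := by
    intro m
    induction m with
    | zero => norm_num
    | succ m ih =>
      have hβm : (0:ℝ) ≤ β + m := by positivity
      have hrec := J_rec (β := β + m) hβm
      push_cast
      have e : β + ((m:ℝ) + 1) + 1 = β + m + 2 := by ring
      have e2 : β + ((m:ℝ) + 1) = β + m + 1 := by ring
      rw [e, e2]
      calc (β + m + 2) * J (β + m + 1) * J (β + m + 2)
          = J (β + m + 1) * ((β + m + 2) * J (β + m + 2)) := by ring
        _ = J (β + m + 1) * ((β + m + 1) * J (β + m)) := by rw [hrec]
        _ = (β + m + 1) * J (β + m) * J (β + m + 1) := by ring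
      exact ih
  set n : ℕ := ⌊β⌋₊ with hn
  have hnle : (n:ℝ) ≤ β := Nat.floor_le hβ
  have hltn : β < (n:ℝ) + 1 := Nat.lt_floor_add_one β
  have hupper : ∀ m : ℕ, (β + 1) * J β * J (β + 1) ≤ (β + m + 1) / ((n:ℝ) + m + 1) * (π/2) := by
    intro m
    rw [← hshift m]
    have h1 : J (β + m) ≤ J ((n:ℝ) + m) := J_mono (by positivity) (by linarith)
    have h2 : J (β + m + 1) ≤ J ((n:ℝ) + m + 1) := J_mono (by positivity) (by linarith)
    have hid : ((n:ℝ) + m + 1) * J ((n:ℝ) + m) * J ((n:ℝ) + m + 1) = π/2 := by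
      have := J_nat_identity (n + m)
      push_cast at this
      convert this using 3 <;> push_cast <;> ring
    have hpos1 : 0 < J (β + m) := J_pos (by positivity)
    have hpos2 : 0 < J (β + m + 1) := J_pos (by positivity)
    have hd : (0:ℝ) < (n:ℝ) + m + 1 := by positivity
    rw [div_mul_eq_mul_div, le_div_iff₀ hd, ← hid]
    have hprod : J (β + m) * J (β + m + 1) ≤ J ((n:ℝ) + m) * J ((n:ℝ) + m + 1) :=
      mul_le_mul h1 h2 hpos2.le (J_pos (by positivity : (0:ℝ) ≤ (n:ℝ)+m)).le
    nlinarith [mul_le_mul_of_nonneg_left hprod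
      (show (0:ℝ) ≤ (β + m + 1) * ((n:ℝ) + m + 1) by positivity)]
  have hlower : ∀ m : ℕ, (β + m + 1) / ((n:ℝ) + m + 2) * (π/2) ≤ (β + 1) * J β * J (β + 1) := by
    intro m
    rw [← hshift m]
    have h1 : J ((n:ℝ) + m + 1) ≤ J (β + m) := J_mono (by positivity) (by linarith)
    have h2 : J ((n:ℝ) + m + 2) ≤ J (β + m + 1) := J_mono (by positivity) (by linarith)
    have hid : ((n:ℝ) + m + 2) * J ((n:ℝ) + m + 1) * J ((n:ℝ) + m + 2) = π/2 := by
      have := J_nat_identity (n + m + 1)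
      push_cast at this
      convert this using 3 <;> push_cast <;> ring
    have hd : (0:ℝ) < (n:ℝ) + m + 2 := by positivity
    rw [div_mul_eq_mul_div, div_le_iff₀ hd, ← hid]
    have hprod : J ((n:ℝ) + m + 1) * J ((n:ℝ) + m + 2) ≤ J (β + m) * J (β + m + 1) :=
      mul_le_mul h1 h2 (J_pos (by positivity : (0:ℝ) ≤ (n:ℝ)+m+2)).le
        (J_pos (by positivity : (0:ℝ) ≤ β+m)).le
    nlinarith [mul_le_mul_of_nonneg_left hprod
      (show (0:ℝ) ≤ (β + m + 1) * ((n:ℝ) + m + 2) by positivity)]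
  have hup : Tendsto (fun m : ℕ => (β + m + 1) / ((n:ℝ) + m + 1) * (π/2)) atTop (nhds (π/2)) := by
    have := (tendsto_ratio (β + 1) ((n:ℝ) + 1)).mul_const (π/2)
    simpa [add_assoc, add_comm, add_left_comm] using this
  have hlo : Tendsto (fun m : ℕ => (β + m + 1) / ((n:ℝ) + m + 2) * (π/2)) atTop (nhds (π/2)) := by
    have := (tendsto_ratio (β + 1) ((n:ℝ) + 2)).mul_const (π/2)
    simpa [add_assoc, add_comm, add_left_comm] using this
  have hle : (β + 1) * J β * J (β + 1) ≤ π/2 :=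
    ge_of_tendsto' hup hupper
  have hge : π/2 ≤ (β + 1) * J β * J (β + 1) :=
    le_of_tendsto' hlo hlower
  linarith

lemma J_two : J 2 = π/4 := by
  have h := J_rec (β := 0) le_rfl
  rw [J_zero] at h
  norm_num at h
  linarith

lemma tendsto_ratio2 (a b : ℝ) :
    Tendsto (fun m : ℕ => (2*(m:ℝ) + a) / (2*(m:ℝ) + b)) atTop (nhds 1) := by
  have h := tendsto_ratio (a/2) (b/2)
  refine h.congr' ?_
  filter_upwards [tendsto_natCast_atTop_atTop.eventually_gt_atTop ((|a| + |b|)/2)]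
    with m hm
  have h1 : (m:ℝ) + b/2 ≠ 0 := by cases abs_cases a <;> cases abs_cases b <;> nlinarith
  have h2 : 2*(m:ℝ) + b ≠ 0 := by cases abs_cases a <;> cases abs_cases b <;> nlinarith
  rw [div_eq_div_iff h1 h2]
  ring

lemma tendsto_J_even_ratio (i : ℕ) :
    Tendsto (fun m : ℕ => J (2*(m:ℝ) + 2*i) / J (2*(m:ℝ))) atTop (nhds 1) := by
  induction i with
  | zero =>
    refine Tendsto.congr (fun m => ?_) tendsto_const_nhds
    rw [Nat.cast_zero, mul_zero, add_zero, div_self (J_pos (by positivity)).ne']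
  | succ i ih =>
    have key : ∀ m : ℕ, J (2*(m:ℝ) + 2*(i+1:ℕ)) / J (2*(m:ℝ))
        = (2*(m:ℝ) + 2*i + 1) / (2*(m:ℝ) + 2*i + 2) * (J (2*(m:ℝ) + 2*i) / J (2*(m:ℝ))) := by
      intro m
      have hrec := J_rec (β := 2*(m:ℝ) + 2*i) (by positivity)
      have e : 2*(m:ℝ) + 2*(i+1:ℕ) = 2*(m:ℝ) + 2*i + 2 := by push_cast; ring
      rw [e]
      have hd1 : (0:ℝ) < 2*(m:ℝ) + 2*i + 2 := by positivity
      have hJ : (0:ℝ) < J (2*(m:ℝ)) := J_pos (by positivity)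
      have hJ2 : J (2*(m:ℝ) + 2*i + 2) = (2*(m:ℝ) + 2*i + 1) * J (2*(m:ℝ) + 2*i)
          / (2*(m:ℝ) + 2*i + 2) := by
        rw [eq_div_iff hd1.ne']
        linarith [hrec]
      rw [hJ2]
      field_simp
    have h1 : Tendsto (fun m : ℕ => (2*(m:ℝ) + 2*i + 1) / (2*(m:ℝ) + 2*i + 2)) atTop (nhds 1) := by
      have h := tendsto_ratio2 (2*i + 1) (2*i + 2)
      simpa [← add_assoc] using h
    have := h1.mul ih
    rw [mul_one] at this
    exact this.congr fun m => (key m).symm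

lemma tendsto_main_ratio (α : ℝ) (hα : 0 < α) :
    Tendsto (fun m : ℕ => J (α + 2*(m:ℝ) + 1) / J (2*(m:ℝ) + 2)) atTop (nhds 1) := by
  set t : ℕ := ⌈α⌉₊ with ht
  have hαt : α ≤ t := Nat.le_ceil α
  -- lower bound sequence
  have hlow : Tendsto (fun m : ℕ => J (2*(m:ℝ) + 2 + 2*t) / J (2*(m:ℝ) + 2)) atTop (nhds 1) := by
    have h := (tendsto_J_even_ratio t).comp (tendsto_add_atTop_nat 1)
    refine h.congr fun m => ?_
    have e1 : 2*(((m+1 : ℕ)):ℝ) + 2*t = 2*(m:ℝ) + 2 + 2*t := by push_cast; ring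
    have e2 : 2*(((m+1 : ℕ)):ℝ) = 2*(m:ℝ) + 2 := by push_cast; ring
    simp only [Function.comp, e1, e2]
  -- upper bound sequence
  have hupf : ∀ m : ℕ, J (2*(m:ℝ)) / J (2*(m:ℝ) + 2) = (2*(m:ℝ) + 2) / (2*(m:ℝ) + 1) := by
    intro m
    have hrec := J_rec (β := 2*(m:ℝ)) (by positivity)
    have hJ : (0:ℝ) < J (2*(m:ℝ) + 2) := J_pos (by positivity)
    rw [div_eq_div_iff hJ.ne' (by positivity)]
    linarith [hrec]
  have hup : Tendsto (fun m : ℕ => J (2*(m:ℝ)) / J (2*(m:ℝ) + 2)) atTop (nhds 1) := by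
    have h := tendsto_ratio2 2 1
    refine h.congr fun m => ?_
    rw [hupf m]
  refine tendsto_of_tendsto_of_tendsto_of_le_of_le hlow hup ?_ ?_
  · intro m
    have hJden : (0:ℝ) < J (2*(m:ℝ) + 2) := J_pos (by positivity)
    have hnum : J (2*(m:ℝ) + 2 + 2*t) ≤ J (α + 2*(m:ℝ) + 1) := by
      refine J_mono (by positivity) ?_
      have : (1:ℝ) ≤ t := by
        have : 1 ≤ t := Nat.one_le_ceil_iff.mpr hα
        exact_mod_cast this
      linarith
    exact div_le_div_of_nonneg_right hnum hJden.le |>.trans_eq rfl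
  · intro m
    have hJden : (0:ℝ) < J (2*(m:ℝ) + 2) := J_pos (by positivity)
    have hnum : J (α + 2*(m:ℝ) + 1) ≤ J (2*(m:ℝ)) := by
      refine J_mono (by positivity) (by linarith)
    exact div_le_div_of_nonneg_right hnum hJden.le |>.trans_eq rfl

lemma aux_div (x A B c1 c2 d1 d2 : ℝ) (hB : B ≠ 0) (hc2 : c2 ≠ 0) (hd1 : d1 ≠ 0)
    (hd2 : d2 ≠ 0) :
    x * ((c1 * A / d1) / (c2 * B / d2)) = x * (A / B) * (c1 * d2 / (d1 * c2)) := by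
  field_simp

lemma prod_formula (α : ℝ) (hα : 0 < α) (m : ℕ) :
    (1 / α) * ∏ k ∈ Finset.Icc 1 (m+1),
        (k : ℝ) * (α/2 + k - 1) / ((k - 1/2) * (α/2 + k - 1/2))
      = J α * (J (α + 2*(m:ℝ) + 1) / J (2*(m:ℝ) + 2)) := by
  have hπ : (0:ℝ) < π := Real.pi_pos
  induction m with
  | zero =>
    rw [Finset.Icc_self, Finset.prod_singleton]
    have hα1 : α + 1 ≠ 0 := by positivity
    have hJJ : J α * J (α + 1) = π / (2*(α+1)) := by
      rw [eq_div_iff (by positivity : (2:ℝ)*(α+1) ≠ 0)]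
      linarith [J_identity hα.le]
    have e1 : α + 2*((0:ℕ):ℝ) + 1 = α + 1 := by norm_num
    have e2 : 2*((0:ℕ):ℝ) + 2 = 2 := by norm_num
    rw [e1, e2, J_two, div_div_eq_mul_div,
      show J α * (J (α + 1) * 4 / π) = J α * J (α + 1) * 4 / π by ring, hJJ]
    have e3 : π / (2*(α+1)) * 4 / π = 2 / (α+1) := by
      rw [div_mul_eq_mul_div, div_div, div_eq_div_iff (by positivity) hα1]
      ring
    rw [e3, Nat.cast_one]
    rw [show ((1:ℝ) * (α/2 + 1 - 1) / ((1 - 1/2) * (α/2 + 1 - 1/2)))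
        = (2*α) / (α + 1) from by
          rw [div_eq_div_iff (by intro h; nlinarith : ((1:ℝ) - 1/2) * (α/2 + 1 - 1/2) ≠ 0) hα1]
          ring]
    rw [div_mul_div_comm, div_eq_div_iff (by positivity) hα1]
    ring
  | succ m ih =>
    rw [Finset.prod_Icc_succ_top (by omega : 1 ≤ m + 1 + 1), ← mul_assoc, ih]
    have e1 : α + 2*(((m+1:ℕ)):ℝ) + 1 = (α + 2*(m:ℝ) + 1) + 2 := by push_cast; ring
    have e2 : 2*(((m+1:ℕ)):ℝ) + 2 = (2*(m:ℝ) + 2) + 2 := by push_cast; ring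
    rw [e1, e2]
    have hrec1 := J_rec (β := α + 2*(m:ℝ) + 1) (by positivity)
    have hrec2 := J_rec (β := 2*(m:ℝ) + 2) (by positivity)
    have hA : J (α + 2*(m:ℝ) + 1 + 2)
        = (α + 2*(m:ℝ) + 2) * J (α + 2*(m:ℝ) + 1) / (α + 2*(m:ℝ) + 3) := by
      rw [eq_div_iff (by positivity : α + 2*(m:ℝ) + 3 ≠ 0)]
      linarith [hrec1]
    have hB : J (2*(m:ℝ) + 2 + 2)
        = (2*(m:ℝ) + 3) * J (2*(m:ℝ) + 2) / (2*(m:ℝ) + 4) := by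
      rw [eq_div_iff (by positivity : 2*(m:ℝ) + 4 ≠ 0)]
      linarith [hrec2]
    have hBpos : (0:ℝ) < J (2*(m:ℝ) + 2) := J_pos (by positivity)
    have hm0 : (0:ℝ) ≤ (m:ℝ) := Nat.cast_nonneg m
    have h1 : ((m+1+1:ℕ):ℝ) - 1/2 ≠ 0 := by push_cast; intro h; linarith
    have h2 : α/2 + ((m+1+1:ℕ):ℝ) - 1/2 ≠ 0 := by push_cast; intro h; linarith
    have h3 : α + 2*(m:ℝ) + 3 ≠ 0 := by positivity
    have h4 : 2*(m:ℝ) + 3 ≠ 0 := by positivity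
    have h5 : 2*(m:ℝ) + 4 ≠ 0 := by positivity
    rw [hA, hB, aux_div (J α) _ _ _ _ _ _ hBpos.ne' h4 h3 h5]
    congr 1
    rw [div_eq_div_iff (mul_ne_zero h1 h2) (mul_ne_zero h3 h4)]
    push_cast
    ring


/-- For `α > 0`, the Wallis integral `I_α = ∫_0^{π/2} (sin θ)^α dθ` satisfies
`I_α = (1/α)·∏_{k=1}^∞ k(α/2+k-1)/((k-1/2)(α/2+k-1/2))`. -/
theorem wallis_integral_eq_product (α : ℝ) (hα : 0 < α) :
    Tendsto (fun m : ℕ => (1 / α) * ∏ k ∈ Finset.Icc 1 m,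
        (k : ℝ) * (α/2 + k - 1) / ((k - 1/2) * (α/2 + k - 1/2))) atTop
      (nhds (∫ θ in (0 : ℝ)..(Real.pi/2), Real.sin θ ^ α)) := by
  have hJ : (∫ θ in (0:ℝ)..(Real.pi/2), Real.sin θ ^ α) = J α := rfl
  rw [hJ, ← Filter.tendsto_add_atTop_iff_nat 1]
  have h := (tendsto_main_ratio α hα).const_mul (J α)
  rw [mul_one] at h
  exact h.congr fun m => (prod_formula α hα m).symm
end

section
/- For 0 < t < 1, the digamma function satisfies ψ(t) = -γ - (1/Γ(1-t))·∑_{n=1}^∞ Γ(n+1-t)/(n·n!), where γ is the Euler–Mascheroni constant. -/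
open Real Filter Finset Set Topology MeasureTheory

namespace DigammaAux

local notation "γ" => Real.eulerMascheroniConstant

noncomputable def a (t : ℝ) (n : ℕ) : ℝ := ∏ k ∈ Finset.range n, (1 - t / (k + 1))

lemma a_succ (t : ℝ) (n : ℕ) : a t (n + 1) = a t n * (1 - t / (n + 1)) := by
  simp [a, Finset.prod_range_succ]

lemma a_nonneg {t : ℝ} (ht1 : t ≤ 1) (n : ℕ) : 0 ≤ a t n := by
  refine Finset.prod_nonneg fun k _ => ?_
  have hk : (1:ℝ) ≤ (k:ℝ) + 1 := by
    have := Nat.cast_nonneg (α := ℝ) k; linarith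
  have : t / ((k:ℝ) + 1) ≤ 1 := by
    rw [div_le_one (by positivity)]
    linarith
  linarith

lemma a_le_one {t : ℝ} (ht0 : 0 ≤ t) (ht1 : t ≤ 1) (n : ℕ) : a t n ≤ 1 := by
  refine Finset.prod_le_one (fun k _ => ?_) (fun k _ => ?_)
  · have : t / ((k:ℝ) + 1) ≤ 1 := by
      rw [div_le_one (by positivity)]
      have := Nat.cast_nonneg (α := ℝ) k
      linarith
    linarith
  · have : 0 ≤ t / ((k:ℝ) + 1) := by positivity
    linarith

lemma a_mul_gamma {t : ℝ} (ht1 : t < 1) (n : ℕ) :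
    a t n * (n.factorial * Real.Gamma (1 - t)) = Real.Gamma (n + 1 - t) := by
  induction n with
  | zero => simp [a]
  | succ n ih =>
    have hpos : (0:ℝ) < n + 1 - t := by
      have : (0:ℝ) ≤ n := Nat.cast_nonneg n
      linarith
    have hG : Real.Gamma ((n + 1 - t) + 1) = (n + 1 - t) * Real.Gamma (n + 1 - t) :=
      Real.Gamma_add_one hpos.ne'
    have harg : ((n + 1 : ℕ) : ℝ) + 1 - t = (n + 1 - t) + 1 := by push_cast; ring
    rw [harg, hG, ← ih, a_succ]
    have hn1 : ((n:ℝ) + 1) ≠ 0 := by positivity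
    have : (1 - t / ((n:ℝ) + 1)) = (n + 1 - t) / (n + 1) := by field_simp
    rw [this, Nat.factorial_succ]
    push_cast
    field_simp

lemma summable_partA {t : ℝ} (ht0 : 0 < t) (ht1 : t < 1) :
    Summable (fun k : ℕ => 1 / (t + k) - 1 / ((k : ℝ) + 1)) := by
  have h : ∀ k : ℕ, ‖1 / (t + k) - 1 / ((k : ℝ) + 1)‖ ≤ (1/t) * (1 / ((k:ℝ)+1)^2) := by
    intro k
    have hk : (0:ℝ) ≤ k := Nat.cast_nonneg k
    have h1 : (0:ℝ) < t + k := by linarith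
    have h2 : (0:ℝ) < (k:ℝ) + 1 := by linarith
    have hle : 1 / ((k:ℝ)+1) ≤ 1 / (t + k) := by
      apply one_div_le_one_div_of_le h1; linarith
    rw [Real.norm_eq_abs, abs_of_nonneg (by linarith)]
    have key : 1 / (t + k) - 1 / ((k:ℝ)+1) = (1 - t) / ((t+k)*((k:ℝ)+1)) := by
      field_simp; ring
    rw [key]
    have hden : t * ((k:ℝ)+1)^2 ≤ (t+k)*((k:ℝ)+1) := by
      nlinarith [mul_nonneg (mul_nonneg h2.le hk) (by linarith : (0:ℝ) ≤ 1 - t)]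
    calc (1 - t) / ((t+k)*((k:ℝ)+1)) ≤ 1 / ((t+k)*((k:ℝ)+1)) := by
          gcongr
          linarith
      _ ≤ 1 / (t * ((k:ℝ)+1)^2) := one_div_le_one_div_of_le (by positivity) hden
      _ = (1/t) * (1 / ((k:ℝ)+1)^2) := by rw [one_div, mul_inv, one_div, one_div]
  refine Summable.of_norm_bounded ?_ h
  apply Summable.mul_left
  have := Real.summable_one_div_nat_rpow (p := 2) |>.mpr (by norm_num)
  have h2 : Summable (fun k : ℕ => 1 / ((k:ℝ)+1)^2) := by
    have := (summable_nat_add_iff (f := fun k : ℕ => 1 / ((k:ℝ))^2) 1).mpr ?_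
    · simpa [add_comm] using this
    · simpa [Real.rpow_natCast] using Real.summable_one_div_nat_rpow (p := 2) |>.mpr (by norm_num)
  exact h2

lemma binomial_hasSum {t : ℝ} (ht0 : 0 < t) (ht1 : t < 1) {x : ℝ} (hx0 : 0 < x) (hx1 : x < 1) :
    HasSum (fun n : ℕ => a t n * x ^ n) ((1 - x) ^ (t - 1)) := by
  set f : ℝ → ℝ := fun s => (1 - s) ^ (t - 1) with hfdef
  set s : Set ℝ := Icc 0 x with hsdef
  have hs : UniqueDiffOn ℝ s := uniqueDiffOn_Icc hx0
  -- the k-th derivative formula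
  have hgd : ∀ (p : ℝ) (c : ℝ) (y : ℝ), y < 1 →
      HasDerivAt (fun u => c * (1 - u) ^ p) (c * (-p) * (1 - y) ^ (p - 1)) y := by
    intro p c y hy
    have h1 : HasDerivAt (fun u : ℝ => 1 - u) (-1) y := by
      simpa using (hasDerivAt_id y).const_sub 1
    have h2 : HasDerivAt (fun v : ℝ => v ^ p) (p * (1 - y) ^ (p - 1)) (1 - y) :=
      Real.hasDerivAt_rpow_const (Or.inl (by linarith))
    have := (h2.comp y h1).const_mul c
    rw [show c * -p * (1 - y) ^ (p - 1) = c * (p * (1 - y) ^ (p - 1) * -1) by ring]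
    exact this
  have hiter : ∀ n : ℕ, Set.EqOn (iteratedDerivWithin n f s)
      (fun y => (n.factorial : ℝ) * a t n * (1 - y) ^ (t - 1 - n)) s := by
    intro n
    induction n with
    | zero =>
      intro y hy
      simp [a, iteratedDerivWithin_zero, f]
    | succ n ih =>
      intro y hy
      have hy1 : y < 1 := lt_of_le_of_lt hy.2 hx1
      rw [iteratedDerivWithin_succ]
      have hcong : derivWithin (iteratedDerivWithin n f s) s y =
          derivWithin (fun u => (n.factorial : ℝ) * a t n * (1 - u) ^ (t - 1 - n)) s y :=
        derivWithin_congr ih (ih hy)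
      rw [hcong]
      have hda := hgd (t - 1 - n) ((n.factorial : ℝ) * a t n) y hy1
      rw [hda.hasDerivWithinAt.derivWithin (hs y hy)]
      have harg : t - 1 - n - 1 = t - 1 - (n + 1 : ℕ) := by push_cast; ring
      rw [harg]
      have hcoef : (n.factorial : ℝ) * a t n * -(t - 1 - n)
          = ((n+1).factorial : ℝ) * a t (n + 1) := by
        rw [a_succ, Nat.factorial_succ]
        have hn1 : ((n:ℝ) + 1) ≠ 0 := by positivity
        push_cast
        field_simp
        ring
      rw [← hcoef]
  -- smoothness
  have hcd : ∀ m : ℕ, ContDiffOn ℝ m f s := by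
    intro m
    intro y hy
    have hy1 : (1:ℝ) - y ≠ 0 := by
      have : y < 1 := lt_of_le_of_lt hy.2 hx1
      linarith
    exact (((contDiffAt_const (c := (1:ℝ))).sub contDiffAt_id).rpow_const_of_ne
      hy1).contDiffWithinAt
  -- Taylor polynomial value
  have htay : ∀ n : ℕ, taylorWithinEval f n s 0 x = ∑ k ∈ Finset.range (n+1), a t k * x ^ k := by
    intro n
    rw [taylor_within_apply]
    refine Finset.sum_congr rfl fun k hk => ?_
    have h0 : (0:ℝ) ∈ s := ⟨le_refl 0, hx0.le⟩
    rw [hiter k h0]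
    simp only [sub_zero, smul_eq_mul]
    rw [Real.one_rpow]
    have : (k.factorial : ℝ) ≠ 0 := by positivity
    field_simp
  -- remainder
  have hrem : ∀ n : ℕ, ∃ x' ∈ Ioo 0 x,
      f x - ∑ k ∈ Finset.range (n+1), a t k * x ^ k =
        ((n+1).factorial : ℝ) * a t (n+1) * (1 - x') ^ (t - 1 - (n+1:ℕ)) *
          (x - x') ^ n / n.factorial * x := by
    intro n
    have hdiff : DifferentiableOn ℝ (iteratedDerivWithin n f s) (Ioo 0 x) := by
      refine DifferentiableOn.congr ?_ (fun y hy => hiter n (Ioo_subset_Icc_self hy))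
      intro y hy
      have hy1 : y < 1 := lt_of_lt_of_le hy.2 hx1.le
      exact ((hgd (t-1-n) _ y hy1).differentiableAt.differentiableWithinAt)
    have hu : Set.uIcc (0:ℝ) x = s := Set.uIcc_of_le hx0.le
    have hu' : Set.uIoo (0:ℝ) x = Ioo 0 x := Set.uIoo_of_le hx0.le
    obtain ⟨x', hx', h⟩ := taylor_mean_remainder_cauchy (f := f) (x₀ := 0) (x := x) (n := n)
      hx0.ne (by rw [hu]; exact hcd n) (by rw [hu, hu']; exact hdiff)
    rw [hu] at h
    rw [hu'] at hx'
    refine ⟨x', hx', ?_⟩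
    rw [htay n] at h
    rw [h, hiter (n+1) ⟨hx'.1.le, hx'.2.le⟩]
    ring
  -- remainder bounds
  have hfx : (0:ℝ) < 1 - x := by linarith
  have hbound : ∀ n : ℕ, 0 ≤ f x - ∑ k ∈ Finset.range (n+1), a t k * x ^ k ∧
      f x - ∑ k ∈ Finset.range (n+1), a t k * x ^ k
        ≤ (((n:ℝ)+1) * x ^ n) * ((1 - x) ^ (t-2) * x) := by
    intro n
    obtain ⟨x', hx', h⟩ := hrem n
    have h1 : (0:ℝ) < 1 - x' := by have := hx'.2; linarith
    have h2 : (0:ℝ) ≤ x - x' := by have := hx'.2; linarith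
    have hfac : (((n+1).factorial : ℝ)) / n.factorial = (n:ℝ) + 1 := by
      rw [Nat.factorial_succ]
      push_cast
      have : (n.factorial : ℝ) ≠ 0 := by positivity
      field_simp
    have hexp : t - 1 - ((n+1:ℕ):ℝ) = (t - 2) - n := by push_cast; ring
    have hsplit : (1 - x') ^ (t - 1 - ((n+1:ℕ):ℝ)) * (x - x') ^ n
        = (1 - x') ^ (t-2) * ((x - x')/(1 - x')) ^ n := by
      rw [hexp, Real.rpow_sub h1, div_pow, Real.rpow_natCast]
      field_simp
    have hR : f x - ∑ k ∈ Finset.range (n+1), a t k * x ^ k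
        = (((n:ℝ)+1) * a t (n+1)) * ((1 - x') ^ (t-2) * ((x - x')/(1 - x')) ^ n) * x := by
      rw [h, ← hsplit, Nat.factorial_succ]
      have hnf : (n.factorial : ℝ) ≠ 0 := by positivity
      push_cast
      field_simp
    have hge : 0 ≤ (((n:ℝ)+1) * a t (n+1)) * ((1 - x') ^ (t-2) * ((x - x')/(1 - x')) ^ n) * x := by
      have := a_nonneg ht1.le (n+1)
      have h3 : (0:ℝ) ≤ (1 - x') ^ (t-2) := Real.rpow_nonneg h1.le _
      positivity
    constructor
    · rw [hR]; exact hge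
    · rw [hR]
      have hb1 : (1 - x') ^ (t-2) ≤ (1 - x) ^ (t-2) :=
        Real.rpow_le_rpow_of_nonpos hfx (by linarith [hx'.1]) (by linarith)
      have hb2 : ((x - x')/(1 - x')) ^ n ≤ x ^ n := by
        apply pow_le_pow_left₀ (by positivity)
        rw [div_le_iff₀ h1]
        nlinarith [hx'.1, hx'.2]
      have hb3 : a t (n+1) ≤ 1 := a_le_one ht0.le ht1.le (n+1)
      have ha := a_nonneg ht1.le (n+1)
      have h3 : (0:ℝ) ≤ (1 - x') ^ (t-2) := Real.rpow_nonneg h1.le _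
      have h4 : (0:ℝ) ≤ ((x - x')/(1 - x')) ^ n := by positivity
      have h5 : (0:ℝ) ≤ x ^ n := by positivity
      have h6 : (0:ℝ) ≤ (1 - x) ^ (t-2) := Real.rpow_nonneg hfx.le _
      have key : (1 - x') ^ (t-2) * ((x - x')/(1 - x')) ^ n ≤ (1 - x) ^ (t-2) * x ^ n := by
        exact mul_le_mul hb1 hb2 h4 h6
      calc (((n:ℝ)+1) * a t (n+1)) * ((1 - x') ^ (t-2) * ((x - x')/(1 - x')) ^ n) * x
          ≤ (((n:ℝ)+1) * 1) * ((1 - x) ^ (t-2) * x ^ n) * x := by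
            apply mul_le_mul_of_nonneg_right _ hx0.le
            apply mul_le_mul _ key (by positivity) (by positivity)
            apply mul_le_mul_of_nonneg_left hb3 (by positivity)
        _ = (((n:ℝ)+1) * x ^ n) * ((1 - x) ^ (t-2) * x) := by ring
  -- limit
  have hC : Tendsto (fun n : ℕ => (((n:ℝ)+1) * x ^ n) * ((1 - x) ^ (t-2) * x)) atTop (𝓝 0) := by
    have hsummable : Summable (fun n : ℕ => ((n:ℝ)+1) * x ^ n) := by
      have h1 : Summable (fun n : ℕ => (n:ℝ) * x ^ n) := by
        have := summable_pow_mul_geometric_of_norm_lt_one (R := ℝ) 1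
          (r := x) (by rw [Real.norm_eq_abs, abs_of_pos hx0]; exact hx1)
        simpa using this
      have h2 : Summable (fun n : ℕ => x ^ n) := summable_geometric_of_lt_one hx0.le hx1
      have := h1.add h2
      convert this using 2 with n
      ring
    have h0 := hsummable.tendsto_atTop_zero
    simpa using h0.mul_const ((1 - x) ^ (t-2) * x)
  have htend : Tendsto (fun n : ℕ => ∑ k ∈ Finset.range (n+1), a t k * x ^ k) atTop
      (𝓝 ((1 - x) ^ (t - 1))) := by
    have hz : Tendsto (fun n : ℕ => f x - ∑ k ∈ Finset.range (n+1), a t k * x ^ k) atTop (𝓝 0) :=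
      squeeze_zero (fun n => (hbound n).1) (fun n => (hbound n).2) hC
    have := (tendsto_const_nhds (x := f x) (f := atTop (α := ℕ))).sub hz
    simpa using this
  have hterm : ∀ n : ℕ, 0 ≤ a t n * x ^ n :=
    fun n => mul_nonneg (a_nonneg ht1.le n) (by positivity)
  rw [hasSum_iff_tendsto_nat_of_nonneg hterm]
  exact (Filter.tendsto_add_atTop_iff_nat 1).mp htend

lemma partB {t : ℝ} (ht0 : 0 < t) (ht1 : t < 1) :
    ∑' n : ℕ, a t (n + 1) / (n + 1) = ∑' k : ℕ, (1 / (t + k) - 1 / ((k : ℝ) + 1)) := by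
  set F : ℕ → ℝ → ℝ := fun n x => a t (n + 1) * (1 - x) ^ n with hF
  set G : ℕ → ℝ → ℝ := fun k x => x ^ ((k : ℝ) + t - 1) - x ^ k with hG
  -- pointwise sums on Ioo 0 1
  have hFsum : ∀ x ∈ Ioo (0:ℝ) 1, HasSum (fun n => F n x) ((x ^ (t-1) - 1) / (1 - x)) := by
    intro x hx
    have h1x : (0:ℝ) < 1 - x := by linarith [hx.2]
    have hb := binomial_hasSum ht0 ht1 h1x (by linarith [hx.1])
    rw [show (1 - (1 - x)) = x by ring] at hb
    have h2 := (hasSum_nat_add_iff' (f := fun n => a t n * (1-x)^n) 1).mpr hb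
    simp only [Finset.range_one, Finset.sum_singleton, pow_zero, mul_one] at h2
    have h3 := h2.div_const (1 - x)
    have ha0 : a t 0 = 1 := by simp [a]
    have heq : (fun i : ℕ => a t (i + 1) * (1 - x) ^ (i + 1) / (1 - x))
        = fun n : ℕ => a t (n + 1) * (1 - x) ^ n := by
      funext n
      rw [pow_succ, ← mul_assoc, mul_div_assoc, div_self h1x.ne', mul_one]
    rw [heq, ha0] at h3
    exact h3
  have hGsum : ∀ x ∈ Ioo (0:ℝ) 1, HasSum (fun k => G k x) ((x ^ (t-1) - 1) / (1 - x)) := by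
    intro x hx
    have hx0 := hx.1
    have hx1 := hx.2
    have hgeom : HasSum (fun k : ℕ => x ^ k) (1 - x)⁻¹ :=
      hasSum_geometric_of_lt_one hx0.le hx1
    have h1 : HasSum (fun k : ℕ => x ^ (t-1) * x ^ k) (x ^ (t-1) * (1 - x)⁻¹) :=
      hgeom.mul_left _
    have h2 : ∀ k : ℕ, x ^ (t-1) * x ^ k = x ^ ((k : ℝ) + t - 1) := by
      intro k
      rw [← Real.rpow_natCast x k, ← Real.rpow_add hx0]
      ring_nf
    have h3 := h1.sub hgeom
    have heq : (fun k : ℕ => x ^ (t-1) * x ^ k - x ^ k)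
        = fun k : ℕ => x ^ ((k : ℝ) + t - 1) - x ^ k := by
      funext k
      rw [h2 k]
    rw [heq] at h3
    rw [show ((x ^ (t-1) - 1) / (1 - x)) = x ^ (t-1) * (1-x)⁻¹ - (1-x)⁻¹ by
      rw [div_eq_mul_inv, sub_mul, one_mul]]
    exact h3
  -- integrability
  have hFc : ∀ n : ℕ, Continuous (F n) := by
    intro n; fun_prop
  have hFint : ∀ n : ℕ, IntegrableOn (F n) (Ioo (0:ℝ) 1) :=
    fun n => ((hFc n).integrableOn_Icc (a := 0) (b := 1)).mono_set Ioo_subset_Icc_self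
  have hGiint : ∀ k : ℕ, IntervalIntegrable (G k) volume 0 1 := by
    intro k
    apply IntervalIntegrable.sub
    · apply intervalIntegral.intervalIntegrable_rpow'
      have : (0:ℝ) ≤ k := Nat.cast_nonneg k
      linarith
    · exact intervalIntegral.intervalIntegrable_pow k
  have hGint : ∀ k : ℕ, IntegrableOn (G k) (Ioo (0:ℝ) 1) := by
    intro k
    have := (intervalIntegrable_iff_integrableOn_Ioo_of_le (by norm_num : (0:ℝ) ≤ 1)).mp (hGiint k)
    exact this
  -- integral values
  have hFI : ∀ n : ℕ, ∫ x in Ioo (0:ℝ) 1, F n x = a t (n+1) / (n+1) := by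
    intro n
    rw [← MeasureTheory.integral_Ioc_eq_integral_Ioo,
      ← intervalIntegral.integral_of_le (by norm_num : (0:ℝ) ≤ 1)]
    rw [hF]
    simp only
    rw [intervalIntegral.integral_const_mul]
    have hsub : ∫ x in (0:ℝ)..1, (1 - x) ^ n = ∫ y in (0:ℝ)..1, y ^ n := by
      have := intervalIntegral.integral_comp_sub_left (a := (0:ℝ)) (b := 1)
        (fun y => y ^ n) 1
      simpa using this
    rw [hsub, integral_pow]
    simp
    ring
  have hGI : ∀ k : ℕ, ∫ x in Ioo (0:ℝ) 1, G k x = 1 / (t + k) - 1 / ((k:ℝ)+1) := by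
    intro k
    have hk : (0:ℝ) ≤ k := Nat.cast_nonneg k
    have hr : (-1:ℝ) < (k:ℝ) + t - 1 := by linarith
    have hint1 : IntervalIntegrable (fun x : ℝ => x ^ ((k:ℝ) + t - 1)) volume 0 1 :=
      intervalIntegral.intervalIntegrable_rpow' hr
    have hint2 : IntervalIntegrable (fun x : ℝ => x ^ k) volume 0 1 :=
      intervalIntegral.intervalIntegrable_pow k
    rw [← MeasureTheory.integral_Ioc_eq_integral_Ioo,
      ← intervalIntegral.integral_of_le (by norm_num : (0:ℝ) ≤ 1), hG]
    simp only
    rw [intervalIntegral.integral_sub hint1 hint2, integral_pow,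
      integral_rpow (Or.inl hr)]
    rw [Real.one_rpow, Real.zero_rpow (by linarith : (k:ℝ) + t - 1 + 1 ≠ 0)]
    push_cast
    ring_nf
  -- nonnegativity
  have hFnn : ∀ n : ℕ, (0:ℝ → ℝ) ≤ᵐ[volume.restrict (Ioo (0:ℝ) 1)] F n := by
    intro n
    rw [Filter.EventuallyLE, ae_restrict_iff' measurableSet_Ioo]
    refine ae_of_all _ fun x hx => ?_
    have h1 : (0:ℝ) ≤ 1 - x := by linarith [hx.2]
    have := a_nonneg ht1.le (n+1)
    simp only [hF, Pi.zero_apply]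
    positivity
  have hGnnx : ∀ x ∈ Ioo (0:ℝ) 1, ∀ k : ℕ, 0 ≤ G k x := by
    intro x hx k
    have hx0 := hx.1
    have hx1 := hx.2
    rw [hG]
    simp only [sub_nonneg, ← Real.rpow_natCast x k]
    exact Real.rpow_le_rpow_of_exponent_ge hx0 hx1.le (by linarith)
  have hGnn : ∀ k : ℕ, (0:ℝ → ℝ) ≤ᵐ[volume.restrict (Ioo (0:ℝ) 1)] G k := by
    intro k
    rw [Filter.EventuallyLE, ae_restrict_iff' measurableSet_Ioo]
    exact ae_of_all _ fun x hx => hGnnx x hx k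
  -- ENNReal chain
  have hmeasF : ∀ n : ℕ, AEMeasurable (fun x : ℝ => ENNReal.ofReal (F n x))
      (volume.restrict (Ioo (0:ℝ) 1)) :=
    fun n => (hFint n).aestronglyMeasurable.aemeasurable.ennreal_ofReal
  have hmeasG : ∀ k : ℕ, AEMeasurable (fun x : ℝ => ENNReal.ofReal (G k x))
      (volume.restrict (Ioo (0:ℝ) 1)) :=
    fun k => (hGint k).aestronglyMeasurable.aemeasurable.ennreal_ofReal
  have step1 : ∀ n : ℕ, ENNReal.ofReal (a t (n+1) / ((n:ℝ)+1))
      = ∫⁻ x in Ioo (0:ℝ) 1, ENNReal.ofReal (F n x) := by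
    intro n
    rw [← hFI n]
    exact ofReal_integral_eq_lintegral_ofReal (hFint n) (hFnn n)
  have step2 : ∀ k : ℕ, ENNReal.ofReal (1 / (t + k) - 1 / ((k:ℝ)+1))
      = ∫⁻ x in Ioo (0:ℝ) 1, ENNReal.ofReal (G k x) := by
    intro k
    rw [← hGI k]
    exact ofReal_integral_eq_lintegral_ofReal (hGint k) (hGnn k)
  have E1 : ∑' n : ℕ, ENNReal.ofReal (a t (n+1) / ((n:ℝ)+1))
      = ∫⁻ x in Ioo (0:ℝ) 1, ENNReal.ofReal ((x ^ (t-1) - 1) / (1 - x)) := by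
    rw [tsum_congr step1, ← lintegral_tsum hmeasF]
    refine setLIntegral_congr_fun measurableSet_Ioo (fun x hx => ?_)
    have hs := hFsum x hx
    have hnn : ∀ n : ℕ, 0 ≤ F n x := by
      intro n
      have h1 : (0:ℝ) ≤ 1 - x := by linarith [hx.2]
      have := a_nonneg ht1.le (n+1)
      simp only [hF]
      positivity
    rw [← ENNReal.ofReal_tsum_of_nonneg hnn hs.summable, hs.tsum_eq]
  have E2 : ∑' k : ℕ, ENNReal.ofReal (1 / (t + k) - 1 / ((k:ℝ)+1))
      = ∫⁻ x in Ioo (0:ℝ) 1, ENNReal.ofReal ((x ^ (t-1) - 1) / (1 - x)) := by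
    rw [tsum_congr step2, ← lintegral_tsum hmeasG]
    refine setLIntegral_congr_fun measurableSet_Ioo (fun x hx => ?_)
    have hs := hGsum x hx
    rw [← ENNReal.ofReal_tsum_of_nonneg (hGnnx x hx) hs.summable, hs.tsum_eq]
  have E : ∑' n : ℕ, ENNReal.ofReal (a t (n+1) / ((n:ℝ)+1))
      = ∑' k : ℕ, ENNReal.ofReal (1 / (t + k) - 1 / ((k:ℝ)+1)) := by
    rw [E1, E2]
  -- back to real numbers
  have hqnn : ∀ k : ℕ, 0 ≤ 1 / (t + k) - 1 / ((k:ℝ)+1) := by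
    intro k
    have hk : (0:ℝ) ≤ k := Nat.cast_nonneg k
    have h1 : (0:ℝ) < t + k := by linarith
    have : 1 / ((k:ℝ)+1) ≤ 1 / (t + k) := by
      apply one_div_le_one_div_of_le h1
      linarith
    linarith
  have hsumq := summable_partA ht0 ht1
  have hfin : (∑' k : ℕ, ENNReal.ofReal (1 / (t + k) - 1 / ((k:ℝ)+1))) ≠ ⊤ := by
    rw [← ENNReal.ofReal_tsum_of_nonneg hqnn hsumq]
    exact ENNReal.ofReal_ne_top
  have hpnn : ∀ n : ℕ, 0 ≤ a t (n+1) / ((n:ℝ)+1) :=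
    fun n => div_nonneg (a_nonneg ht1.le (n+1)) (by positivity)
  have hsump : Summable (fun n : ℕ => a t (n+1) / ((n:ℝ)+1)) := by
    have h1 : (∑' n : ℕ, ENNReal.ofReal (a t (n+1) / ((n:ℝ)+1))) ≠ ⊤ := by
      rw [E]; exact hfin
    have h2 := ENNReal.summable_toReal h1
    refine h2.congr fun n => ?_
    rw [ENNReal.toReal_ofReal (hpnn n)]
  have final : ENNReal.ofReal (∑' n : ℕ, a t (n+1) / ((n:ℝ)+1))
      = ENNReal.ofReal (∑' k : ℕ, (1 / (t + k) - 1 / ((k:ℝ)+1))) := by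
    rw [ENNReal.ofReal_tsum_of_nonneg hpnn hsump,
      ENNReal.ofReal_tsum_of_nonneg hqnn hsumq]
    exact E
  have := (ENNReal.ofReal_eq_ofReal_iff (tsum_nonneg hpnn) (tsum_nonneg hqnn)).mp final
  convert this using 2 with n

lemma partA {t : ℝ} (ht0 : 0 < t) (ht1 : t < 1) :
    deriv Real.Gamma t / Real.Gamma t =
      -Real.eulerMascheroniConstant - ∑' k : ℕ, (1 / (t + k) - 1 / ((k : ℝ) + 1)) := by
  set f : ℝ → ℝ := Real.log ∘ Real.Gamma with hf
  have hder : ∀ {x : ℝ}, 0 < x → DifferentiableAt ℝ f x := by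
    intro x hx
    refine ((Real.differentiableAt_Gamma ?_).log (Real.Gamma_ne_zero ?_)) <;>
      exact fun m => ne_of_gt (by have := Nat.cast_nonneg (α := ℝ) m; linarith)
  have hlog : ∀ {x : ℝ}, 0 < x → deriv f x = deriv Real.Gamma x / Real.Gamma x := by
    intro x hx
    rw [hf, Function.comp_def, deriv.log (Real.differentiableAt_Gamma
      (fun m => ne_of_gt (by have := Nat.cast_nonneg (α := ℝ) m; linarith)))
      (Real.Gamma_pos_of_pos hx).ne']
  have hc : ConvexOn ℝ (Ioi 0) f := Real.convexOn_log_Gamma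
  -- recurrence
  have h_rec : ∀ x : ℝ, 0 < x → f (x + 1) = f x + Real.log x := by
    intro x hx
    simp only [hf, Function.comp_apply, Real.Gamma_add_one hx.ne',
      Real.log_mul hx.ne' (Real.Gamma_pos_of_pos hx).ne', add_comm]
  have hder_rec : ∀ x : ℝ, 0 < x → deriv f (x + 1) = deriv f x + 1 / x := by
    intro x hx
    rw [← deriv_comp_add_const, one_div, ← Real.deriv_log,
      ← deriv_add (hder (by positivity)) (Real.differentiableAt_log hx.ne')]
    apply Filter.EventuallyEq.deriv_eq
    filter_upwards [eventually_gt_nhds hx] using h_rec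
  -- iterate
  have hiter : ∀ n : ℕ, deriv f (t + n) = deriv f t + ∑ k ∈ Finset.range n, 1 / (t + k) := by
    intro n
    induction n with
    | zero => simp
    | succ n ih =>
      have : t + (n + 1 : ℕ) = (t + n) + 1 := by push_cast; ring
      rw [this, hder_rec (t + n) (by positivity), ih, Finset.sum_range_succ]
      ring
  -- derivative at integers
  have hint : ∀ n : ℕ, deriv f ((n : ℝ) + 1) = -γ + harmonic n := by
    intro n
    rw [hlog (by positivity), Real.deriv_Gamma_nat n, Real.Gamma_nat_eq_factorial]
    field_simp
  -- monotonicity of deriv f on Ioi 0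
  have hmono : ∀ x y : ℝ, 0 < x → x < y → deriv f x ≤ deriv f y := by
    intro x y hx hxy
    have h1 : deriv f x ≤ slope f x y :=
      hc.deriv_le_slope (mem_Ioi.mpr hx) (mem_Ioi.mpr (by linarith)) hxy (hder hx)
    have h2 : slope f x y ≤ deriv f y :=
      hc.slope_le_deriv (mem_Ioi.mpr hx) (mem_Ioi.mpr (by linarith)) hxy (hder (by linarith))
    linarith
  -- bounds
  have hbound : ∀ n : ℕ,eulerMascheroniConstant + deriv f t ∈
      Set.Icc ((harmonic n : ℝ) - ∑ k ∈ Finset.range (n+1), 1 / (t + k))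
              ((harmonic (n+1) : ℝ) - ∑ k ∈ Finset.range (n+1), 1 / (t + k)) := by
    intro n
    have h1 : deriv f ((n:ℝ) + 1) ≤ deriv f (t + (n+1 : ℕ)) := by
      apply hmono _ _ (by positivity)
      push_cast; linarith
    have h2 : deriv f (t + (n+1 : ℕ)) ≤ deriv f ((n:ℝ) + 1 + 1) := by
      apply hmono _ _ (by positivity)
      push_cast; linarith
    rw [hiter (n+1)] at h1 h2
    rw [hint n] at h1
    have h3 : ((n:ℝ) + 1 + 1) = ((n+1 : ℕ) : ℝ) + 1 := by push_cast; ring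
    rw [h3, hint (n+1)] at h2
    have h4 : (harmonic (n+1) : ℝ) = harmonic n + 1/(n+1) := by
      rw [harmonic_succ]; push_cast; ring
    constructor
    · push_cast at *; linarith
    · push_cast at *; linarith
  -- limits
  have hsum := summable_partA ht0 ht1
  have hQ : Tendsto (fun n : ℕ => ∑ k ∈ Finset.range (n+1), (1 / (t + k) - 1 / ((k:ℝ)+1)))
      atTop (𝓝 (∑' k : ℕ, (1 / (t + k) - 1 / ((k : ℝ) + 1)))) :=
    (hsum.hasSum.tendsto_sum_nat).comp (tendsto_add_atTop_nat 1)
  set L := ∑' k : ℕ, (1 / (t + k) - 1 / ((k : ℝ) + 1)) with hL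
  have key : γ + deriv f t = -L := by
    have hharm : ∀ n : ℕ, (harmonic (n+1) : ℝ) = ∑ k ∈ Finset.range (n+1), 1 / ((k:ℝ)+1) := by
      intro n
      rw [harmonic]
      push_cast
      refine Finset.sum_congr rfl fun k _ => ?_
      rw [one_div]
    have hub : ∀ n : ℕ, γ + deriv f t ≤
        -∑ k ∈ Finset.range (n+1), (1 / (t + k) - 1 / ((k:ℝ)+1)) := by
      intro n
      have := (hbound n).2
      rw [hharm n, Finset.sum_sub_distrib] at *
      linarith [this]
    have hlb : ∀ n : ℕ, -∑ k ∈ Finset.range (n+1), (1 / (t + k) - 1 / ((k:ℝ)+1)) - 1/(n+1)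
        ≤ γ + deriv f t := by
      intro n
      have := (hbound n).1
      have h4 : (harmonic (n+1) : ℝ) = harmonic n + 1/(n+1) := by
        rw [harmonic_succ]; push_cast; ring
      rw [Finset.sum_sub_distrib]
      rw [← hharm n] at *
      push_cast at *
      linarith
    refine le_antisymm ?_ ?_
    · exact ge_of_tendsto (hQ.neg) (Filter.Eventually.of_forall hub)
    · have h5 : Tendsto (fun n : ℕ =>
          -∑ k ∈ Finset.range (n+1), (1 / (t + k) - 1 / ((k:ℝ)+1)) - 1/((n:ℝ)+1))
          atTop (𝓝 (-L - 0)) := by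
        apply Tendsto.sub hQ.neg
        exact tendsto_one_div_add_atTop_nhds_zero_nat
      rw [sub_zero] at h5
      exact le_of_tendsto h5 (Filter.Eventually.of_forall hlb)
  rw [hlog ht0] at key
  linarith [key]


end DigammaAux

/-- For `0 < t < 1`, the digamma function `ψ = Γ'/Γ` satisfies
`ψ(t) = -γ - (1/Γ(1-t))·∑_{n=1}^∞ Γ(n+1-t)/(n·n!)`. -/
theorem digamma_series (t : ℝ) (ht0 : 0 < t) (ht1 : t < 1) :
    deriv Real.Gamma t / Real.Gamma t =
      -Real.eulerMascheroniConstant -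
        (1 / Real.Gamma (1 - t)) *
          ∑' n : ℕ, Real.Gamma ((n + 1 : ℕ) + 1 - t) / (((n + 1 : ℕ) : ℝ) * (Nat.factorial (n + 1))) := by
  have hG : Real.Gamma (1 - t) ≠ 0 := (Real.Gamma_pos_of_pos (by linarith)).ne'
  have hterm : ∀ n : ℕ,
      Real.Gamma ((n + 1 : ℕ) + 1 - t) / (((n + 1 : ℕ) : ℝ) * (Nat.factorial (n + 1)))
        = Real.Gamma (1 - t) * (DigammaAux.a t (n + 1) / ((n : ℝ) + 1)) := by
    intro n
    have h := DigammaAux.a_mul_gamma ht1 (n + 1)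
    push_cast at h ⊢
    rw [← h]
    have h1 : ((n : ℝ) + 1) ≠ 0 := by positivity
    have h2 : ((n + 1).factorial : ℝ) ≠ 0 := by positivity
    field_simp
  rw [tsum_congr hterm, tsum_mul_left, DigammaAux.partB ht0 ht1]
  rw [one_div, inv_mul_cancel_left₀ hG]
  exact DigammaAux.partA ht0 ht1
end

section
/- For positive integers n and real t with 0 < t < 1, Γ(n+1-t)·Γ(t) = (n-1)!·∏_{k=1}^∞ k(n+k-1)/((k-1+t)(n+k-t)). -/
open Real Filter Finset

/-- `a! * (a+1)(a+2)...(a+b) = (a+b)!` in the reals. -/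
lemma fact_mul_asc (a : ℕ) : ∀ b : ℕ,
    ((a.factorial : ℝ)) * ∏ j ∈ range b, ((a : ℝ) + 1 + j) = ((a + b).factorial : ℝ) := by
  intro b
  induction b with
  | zero => simp
  | succ b ih =>
      rw [Finset.prod_range_succ, ← mul_assoc, ih]
      have : a + (b + 1) = (a + b) + 1 := by ring
      rw [this, Nat.factorial_succ]
      push_cast
      ring

lemma key_prod (n : ℕ) (hn : 1 ≤ n) (t : ℝ) (ht0 : 0 < t) (ht1 : t < 1) : ∀ m : ℕ,
    (∏ k ∈ Finset.Icc 1 m, (k : ℝ) * (n + k - 1) / ((k - 1 + t) * (n + k - t)))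
      * ((∏ j ∈ range m, (t + j)) * ∏ j ∈ range m, ((n : ℝ) + 1 - t + j))
    = (m.factorial : ℝ) * ∏ j ∈ range m, ((n : ℝ) + j) := by
  have hn1 : (1 : ℝ) ≤ (n : ℝ) := by exact_mod_cast hn
  intro m
  induction m with
  | zero => simp
  | succ m ih =>
      have h1 : (0 : ℝ) < (m : ℝ) + t := by positivity
      have h2 : (0 : ℝ) < (n : ℝ) + 1 - t + m := by
        have : (0 : ℝ) ≤ (m : ℝ) := by positivity
        nlinarith
      have hd : (((m : ℝ) + 1) - 1 + t) * ((n : ℝ) + ((m : ℝ) + 1) - t) ≠ 0 := by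
        have : (((m : ℝ) + 1) - 1 + t) * ((n : ℝ) + ((m : ℝ) + 1) - t)
            = ((m : ℝ) + t) * ((n : ℝ) + 1 - t + m) := by ring
        rw [this]
        positivity
      have hf : ((m : ℝ) + 1) * ((n : ℝ) + ((m : ℝ) + 1) - 1)
            / ((((m : ℝ) + 1) - 1 + t) * ((n : ℝ) + ((m : ℝ) + 1) - t))
            * ((t + (m : ℝ)) * ((n : ℝ) + 1 - t + m))
          = ((m : ℝ) + 1) * ((n : ℝ) + m) := by
        rw [div_mul_eq_mul_div, div_eq_iff hd]
        ring
      rw [Finset.prod_Icc_succ_top (by omega), Finset.prod_range_succ,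
        Finset.prod_range_succ, Finset.prod_range_succ, Nat.factorial_succ]
      push_cast
      linear_combination (((m : ℝ) + 1) * ((n : ℝ) + m)) * ih
        + ((∏ k ∈ Finset.Icc 1 m, (k : ℝ) * (n + k - 1) / ((k - 1 + t) * (n + k - t)))
            * ((∏ j ∈ range m, (t + j)) * ∏ j ∈ range m, ((n : ℝ) + 1 - t + j))) * hf

/-- Each linear-in-`m` factor over `m` tends to `1`. -/
lemma tendsto_linear_div (c : ℝ) :
    Tendsto (fun m : ℕ => ((m : ℝ) + c) / m) atTop (nhds 1) := by
  have h : Tendsto (fun m : ℕ => 1 + c / (m : ℝ)) atTop (nhds (1 + 0)) :=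
    tendsto_const_nhds.add (tendsto_const_div_atTop_nhds_zero_nat c)
  rw [add_zero] at h
  refine h.congr' ?_
  filter_upwards [eventually_ge_atTop 1] with m hm
  have hm0 : (m : ℝ) ≠ 0 := by positivity
  field_simp

/-- For positive integer `n` and `0 < t < 1`,
`Γ(n+1-t)·Γ(t) = (n-1)!·∏_{k=1}^∞ k(n+k-1)/((k-1+t)(n+k-t))`. -/
theorem gamma_shift_product (n : ℕ) (hn : 1 ≤ n) (t : ℝ) (ht0 : 0 < t) (ht1 : t < 1) :
    Tendsto (fun m : ℕ => ((Nat.factorial (n - 1)) : ℝ) * ∏ k ∈ Finset.Icc 1 m,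
        (k : ℝ) * (n + k - 1) / ((k - 1 + t) * (n + k - t))) atTop
      (nhds (Real.Gamma ((n : ℝ) + 1 - t) * Real.Gamma t)) := by
  have hn1 : (1 : ℝ) ≤ (n : ℝ) := by exact_mod_cast hn
  -- the correction factor tends to 1
  have hC : Tendsto (fun m : ℕ => (((m : ℝ) + t) / m) * (((m : ℝ) + ((n : ℝ) + 1 - t)) / m)
      * ∏ i ∈ Finset.Icc 1 (n-1), (((m : ℝ) + i) / m)) atTop (nhds 1) := by
    have h3 : Tendsto (fun m : ℕ => ∏ i ∈ Finset.Icc 1 (n-1), (((m : ℝ) + i) / m)) atTop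
        (nhds (∏ i ∈ Finset.Icc 1 (n-1), (1 : ℝ))) :=
      tendsto_finset_prod _ (fun i _ => tendsto_linear_div i)
    simpa using ((tendsto_linear_div t).mul (tendsto_linear_div ((n : ℝ) + 1 - t))).mul h3
  have hΓ := ((Real.GammaSeq_tendsto_Gamma ((n : ℝ) + 1 - t)).mul
      (Real.GammaSeq_tendsto_Gamma t)).mul hC
  rw [mul_one] at hΓ
  refine hΓ.congr' ?_
  filter_upwards [eventually_ge_atTop 1] with m hm
  have hm0 : (0 : ℝ) < (m : ℝ) := by exact_mod_cast hm
  -- notation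
  have hDt : (0 : ℝ) < ∏ j ∈ range m, (t + j) := by
    apply Finset.prod_pos; intro j _; positivity
  have hDu : (0 : ℝ) < ∏ j ∈ range m, ((n : ℝ) + 1 - t + j) := by
    apply Finset.prod_pos; intro j _
    have : (0 : ℝ) ≤ (j : ℝ) := by positivity
    nlinarith
  have htm : (0 : ℝ) < t + m := by positivity
  have hum : (0 : ℝ) < (n : ℝ) + 1 - t + m := by
    have : (0 : ℝ) ≤ (m : ℝ) := by positivity
    nlinarith
  -- the key closed form of the partial product
  have h1 : ∏ k ∈ Finset.Icc 1 m, (k : ℝ) * (n + k - 1) / ((k - 1 + t) * (n + k - t))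
      = (m.factorial : ℝ) * (∏ j ∈ range m, ((n : ℝ) + j))
        / ((∏ j ∈ range m, (t + j)) * ∏ j ∈ range m, ((n : ℝ) + 1 - t + j)) := by
    rw [eq_div_iff (by positivity)]
    exact key_prod n hn t ht0 ht1 m
  -- factorial identity
  have hIcc : (m.factorial : ℝ) * ∏ i ∈ Finset.Icc 1 (n-1), ((m : ℝ) + i)
      = ((m + (n-1)).factorial : ℝ) := by
    rw [show Finset.Icc 1 (n-1) = Finset.Ico 1 n by rw [← Finset.Ico_add_one_right_eq_Icc]; congr 1; omega,
      Finset.prod_Ico_eq_prod_range]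
    rw [Finset.prod_congr rfl (fun k _ => by push_cast; ring :
      ∀ k ∈ range (n - 1), ((m : ℝ) + ↑(1 + k)) = ((m : ℝ) + 1 + k))]
    exact fact_mul_asc m (n-1)
  have hR : (((n-1).factorial : ℝ)) * ∏ j ∈ range m, ((n : ℝ) + j)
      = (((n-1) + m).factorial : ℝ) := by
    rw [Finset.prod_congr rfl (fun j _ => by rw [Nat.cast_sub hn]; push_cast; ring :
      ∀ j ∈ range m, ((n : ℝ) + j) = ((↑(n-1) : ℝ) + 1 + j))]
    exact fact_mul_asc (n-1) m
  have h2 : (m.factorial : ℝ) * ∏ i ∈ Finset.Icc 1 (n-1), ((m : ℝ) + i)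
      = (((n-1).factorial : ℝ)) * ∏ j ∈ range m, ((n : ℝ) + j) := by
    rw [hIcc, hR]; congr 2; omega
  have hProdI : ∏ i ∈ Finset.Icc 1 (n-1), ((m : ℝ) + i)
      = (((n-1).factorial : ℝ)) * (∏ j ∈ range m, ((n : ℝ) + j)) / (m.factorial : ℝ) := by
    rw [eq_div_iff (by positivity)]
    linarith [h2]
  -- the rpow combination
  have hpow : (m : ℝ) ^ ((n : ℝ) + 1 - t) * (m : ℝ) ^ t = (m : ℝ) ^ (n + 1 : ℕ) := by
    rw [← Real.rpow_natCast (m : ℝ) (n+1), ← Real.rpow_add hm0]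
    congr 1
    push_cast
    ring
  have hpowsplit : (m : ℝ) ^ (n + 1 : ℕ) = (m : ℝ) ^ (n - 1 : ℕ) * (m : ℝ) ^ 2 := by
    rw [← pow_add]
    congr 1
    omega
  simp only [Real.GammaSeq, Finset.prod_range_succ]
  rw [h1, Finset.prod_div_distrib, Finset.prod_const, Nat.card_Icc, hProdI]
  have hmt : (0 : ℝ) < (m : ℝ) ^ t := Real.rpow_pos_of_pos hm0 t
  have hu : (m : ℝ) ^ ((n : ℝ) + 1 - t) = (m : ℝ) ^ (n - 1 : ℕ) * (m : ℝ) ^ 2 / (m : ℝ) ^ t := by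
    rw [eq_div_iff (ne_of_gt hmt), ← hpowsplit, ← hpow]
  rw [hu]
  have hmf : (m.factorial : ℝ) ≠ 0 := by positivity
  simp only [Nat.add_sub_cancel]
  field_simp
  ring
end

section
/- For 0 < x < 1/2, the function h(x) = (1 + 0.5/x)^x·√(x+0.5) is strictly increasing. -/
open Real Set

private noncomputable def gAux (x : ℝ) : ℝ :=
  x * Real.log (2*x+1) - x * Real.log (2*x) + (Real.log (2*x+1) - Real.log 2)/2

private lemma gAux_hasDeriv {x : ℝ} (hx : 0 < x) :
    HasDerivAt gAux (Real.log (2*x+1) - Real.log (2*x)) x := by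
  have h1 : HasDerivAt (fun x : ℝ => 2*x+1) 2 x := by
    simpa using ((hasDerivAt_id x).const_mul 2).add_const 1
  have h2 : HasDerivAt (fun x : ℝ => 2*x) 2 x := by
    simpa using (hasDerivAt_id x).const_mul 2
  have hp1 : (0:ℝ) < 2*x+1 := by linarith
  have hp2 : (0:ℝ) < 2*x := by linarith
  have hl1 : HasDerivAt (fun x : ℝ => Real.log (2*x+1)) ((2*x+1)⁻¹ * 2) x :=
    by have := (Real.hasDerivAt_log hp1.ne').comp x h1; exact this
  have hl2 : HasDerivAt (fun x : ℝ => Real.log (2*x)) ((2*x)⁻¹ * 2) x :=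
    (Real.hasDerivAt_log hp2.ne').comp x h2
  have hA : HasDerivAt (fun x : ℝ => x * Real.log (2*x+1))
      (1 * Real.log (2*x+1) + x * ((2*x+1)⁻¹ * 2)) x := (hasDerivAt_id x).mul hl1
  have hB : HasDerivAt (fun x : ℝ => x * Real.log (2*x))
      (1 * Real.log (2*x) + x * ((2*x)⁻¹ * 2)) x := (hasDerivAt_id x).mul hl2
  have hC : HasDerivAt (fun x : ℝ => (Real.log (2*x+1) - Real.log 2)/2)
      ((2*x+1)⁻¹ * 2 / 2) x := ((hl1.sub_const _).div_const 2)
  have := (hA.sub hB).add hC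
  refine HasDerivAt.congr_deriv this ?_
  field_simp
  ring

private lemma gAux_mono : StrictMonoOn gAux (Set.Ioo (0:ℝ) (1/2)) := by
  apply StrictMonoOn.mono (s := Set.Ioi (0:ℝ))
  · apply strictMonoOn_of_deriv_pos (convex_Ioi 0)
    · intro x hx
      exact (gAux_hasDeriv hx).continuousAt.continuousWithinAt
    · intro x hx
      rw [interior_Ioi, Set.mem_Ioi] at hx
      rw [(gAux_hasDeriv hx).deriv]
      have : Real.log (2*x) < Real.log (2*x+1) :=
        Real.log_lt_log (by linarith) (by linarith)
      linarith
  · exact fun x hx => hx.1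

/-- The function `h(x) = (1 + 1/(2x))^x · √(x + 1/2)` is strictly increasing on `(0, 1/2)`. -/
theorem h_strict_mono :
    StrictMonoOn (fun x : ℝ => (1 + 1 / (2 * x)) ^ x * Real.sqrt (x + 1/2))
      (Set.Ioo (0 : ℝ) (1/2)) := by
  have key : ∀ x ∈ Set.Ioo (0:ℝ) (1/2),
      (1 + 1 / (2 * x)) ^ x * Real.sqrt (x + 1/2) = Real.exp (gAux x) := by
    intro x hx
    obtain ⟨hx0, _⟩ := hx
    have hp2 : (0:ℝ) < 2*x := by linarith
    have hp1 : (0:ℝ) < 2*x+1 := by linarith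
    have hb : (0:ℝ) < 1 + 1 / (2*x) := by positivity
    have hbase : 1 + 1 / (2*x) = (2*x+1)/(2*x) := by field_simp
    have hsq : x + 1/2 = (2*x+1)/2 := by ring
    rw [Real.rpow_def_of_pos hb, hbase, Real.log_div hp1.ne' hp2.ne', hsq,
      Real.sqrt_eq_rpow, Real.rpow_def_of_pos (by positivity),
      Real.log_div hp1.ne' (by norm_num), ← Real.exp_add]
    unfold gAux
    ring_nf
  intro x hx y hy hxy
  simp only
  rw [key x hx, key y hy, Real.exp_lt_exp]
  exact gAux_mono hx hy hxy
end
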